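/- arXiv:1410.1968 — 4 statements merged into one kernel-verified Lean document; each statement's English description precedes it below -/
import Mathlib

section
/- W₁₂ W'₂₃* = W'₂₃* W₁₃ W₁₂ as bounded operators on H⊗H⊗H. -/
noncomputable section

open scoped InnerProductSpace ComplexConjugate

private lemma cl_sub {E F : Type*} [AddCommGroup E] [Module ℂ E] [AddCommGroup F] [Module ℂ F]
    (K : E → F) (hadd : ∀ x y, K (x + y) = K x + K y)
    (hsmul : ∀ (c : ℂ) (x : E), K (c • x) = (starRingEnd ℂ) c • K x) :
    ∀ x y : E, K (x - y) = K x - K y := by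
  intro x y
  have hneg : K (-y) = - K y := by
    have := hsmul (-1) y
    simpa using this
  rw [sub_eq_add_neg, hadd, hneg, sub_eq_add_neg]

private lemma cl_cont {E F : Type*} [NormedAddCommGroup E] [NormedAddCommGroup F]
    [Module ℂ E] [Module ℂ F]
    (K : E → F) (hadd : ∀ x y, K (x + y) = K x + K y)
    (hsmul : ∀ (c : ℂ) (x : E), K (c • x) = (starRingEnd ℂ) c • K x)
    (hnorm : ∀ x, ‖K x‖ = ‖x‖) : Continuous K := by
  have : Isometry K := Isometry.of_dist_eq (fun x y => by
    rw [dist_eq_norm, dist_eq_norm, ← cl_sub K hadd hsmul, hnorm])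
  exact this.continuous

private lemma anti_inner {E : Type*} [NormedAddCommGroup E] [InnerProductSpace ℂ E]
    (K : E → E) (hadd : ∀ x y, K (x + y) = K x + K y)
    (hsmul : ∀ (c : ℂ) (x : E), K (c • x) = (starRingEnd ℂ) c • K x)
    (hnorm : ∀ x, ‖K x‖ = ‖x‖) :
    ∀ x y : E, (⟪K x, K y⟫_ℂ) = ⟪y, x⟫_ℂ := by
  have hre : ∀ x y : E, (⟪x, y⟫_ℂ).re = (‖x + y‖ ^ 2 - ‖x‖ ^ 2 - ‖y‖ ^ 2) / 2 := by
    intro x y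
    have h := norm_add_sq (𝕜 := ℂ) x y
    have : (RCLike.re (⟪x, y⟫_ℂ)) = (⟪x, y⟫_ℂ).re := rfl
    rw [this] at h
    linarith
  have hreK : ∀ x y : E, (⟪K x, K y⟫_ℂ).re = (⟪x, y⟫_ℂ).re := by
    intro x y
    rw [hre, hre, ← hadd, hnorm, hnorm, hnorm]
  intro x y
  have him : (⟪K x, K y⟫_ℂ).im = -(⟪x, y⟫_ℂ).im := by
    have h2 : (⟪K x, (Complex.I : ℂ) • K y⟫_ℂ).re = (⟪x, (-Complex.I : ℂ) • y⟫_ℂ).re := by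
      rw [show ((Complex.I : ℂ) • K y) = K ((-Complex.I) • y) from by rw [hsmul]; simp]
      exact hreK x _
    rw [inner_smul_right, inner_smul_right] at h2
    simp [Complex.mul_re] at h2
    linarith
  have hr := hreK x y
  rw [← inner_conj_symm y x]
  apply Complex.ext
  · simp only [Complex.conj_re]
    exact hr
  · simp only [Complex.conj_im]
    rw [him]

private lemma anti_swap {E : Type*} [NormedAddCommGroup E] [InnerProductSpace ℂ E]
    (K : E → E) (hadd : ∀ x y, K (x + y) = K x + K y)
    (hsmul : ∀ (c : ℂ) (x : E), K (c • x) = (starRingEnd ℂ) c • K x)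
    (hnorm : ∀ x, ‖K x‖ = ‖x‖) (hinv : ∀ x, K (K x) = x) :
    ∀ x y : E, (⟪K x, y⟫_ℂ) = ⟪K y, x⟫_ℂ := by
  intro x y
  conv_lhs => rw [show y = K (K y) from (hinv y).symm]
  rw [anti_inner K hadd hsmul hnorm]

private lemma ext_dense {E F : Type*} [NormedAddCommGroup E] [NormedSpace ℂ E]
    [TopologicalSpace F] [T2Space F]
    {s : Set E} (hs : Dense (Submodule.span ℂ s : Set E)) {f g : E → F}
    (hf : Continuous f) (hg : Continuous g)
    (h0 : f 0 = g 0)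
    (hadd : ∀ x y, f x = g x → f y = g y → f (x + y) = g (x + y))
    (hsmul : ∀ (c : ℂ) (x : E), f x = g x → f (c • x) = g (c • x))
    (hgen : ∀ x ∈ s, f x = g x) : ∀ x, f x = g x := by
  have hspan : ∀ x ∈ Submodule.span ℂ s, f x = g x := by
    intro x hx
    induction hx using Submodule.span_induction with
    | mem x hx => exact hgen x hx
    | zero => exact h0
    | add x y _ _ hx hy => exact hadd x y hx hy
    | smul c x _ hx => exact hsmul c x hx
  have hcl : IsClosed {x : E | f x = g x} := isClosed_eq hf hg
  have hsub : closure (Submodule.span ℂ s : Set E) ⊆ {x : E | f x = g x} :=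
    closure_minimal hspan hcl
  intro x
  exact hsub (by rw [hs.closure_eq]; trivial)

private lemma eq_of_inner' {E : Type*} [NormedAddCommGroup E] [InnerProductSpace ℂ E] {x y : E}
    (h : ∀ v, (⟪v, x⟫_ℂ) = ⟪v, y⟫_ℂ) : x = y := by
  have h2 : (⟪x - y, x - y⟫_ℂ) = 0 := by
    rw [inner_sub_right, h (x - y), sub_self]
  rw [← sub_eq_zero]
  exact inner_self_eq_zero.mp h2

private lemma star_inner_left {E : Type*} [NormedAddCommGroup E] [InnerProductSpace ℂ E]
    [CompleteSpace E] (A : E →L[ℂ] E) (x y : E) : ⟪(star A) x, y⟫_ℂ = ⟪x, A y⟫_ℂ := by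
  rw [ContinuousLinearMap.star_eq_adjoint, ContinuousLinearMap.adjoint_inner_left]

private lemma inner_star_right {E : Type*} [NormedAddCommGroup E] [InnerProductSpace ℂ E]
    [CompleteSpace E] (A : E →L[ℂ] E) (x y : E) : ⟪x, (star A) y⟫_ℂ = ⟪A x, y⟫_ℂ := by
  have := star_inner_left (star A) x y
  rw [star_star] at this
  exact this.symm

private lemma inner_star_left {E : Type*} [NormedAddCommGroup E] [InnerProductSpace ℂ E]
    [CompleteSpace E] (A : E →L[ℂ] E) (x y : E) : ⟪A x, y⟫_ℂ = ⟪x, (star A) y⟫_ℂ :=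
  (inner_star_right A x y).symm

set_option maxHeartbeats 2000000 in
theorem stmt_0
    {H H2 H3 : Type*}
    [NormedAddCommGroup H] [InnerProductSpace ℂ H] [CompleteSpace H]
    [NormedAddCommGroup H2] [InnerProductSpace ℂ H2] [CompleteSpace H2]
    [NormedAddCommGroup H3] [InnerProductSpace ℂ H3] [CompleteSpace H3]
    -- the tensor map H × H → H ⊗ H = H2
    (τ : H →L[ℂ] H →L[ℂ] H2)
    (hτinner : ∀ a b c d : H, (inner ℂ (τ a b) (τ c d) : ℂ) = (inner ℂ a c : ℂ) * (inner ℂ b d : ℂ))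
    (hτdense : Dense (Submodule.span ℂ (Set.range fun p : H × H => τ p.1 p.2) : Set H2))
    -- the tensor maps (H ⊗ H) × H → H ⊗ H ⊗ H = H3 and H × (H ⊗ H) → H ⊗ H ⊗ H
    (m : H2 →L[ℂ] H →L[ℂ] H3)
    (m' : H →L[ℂ] H2 →L[ℂ] H3)
    (hmm' : ∀ a b c : H, m (τ a b) c = m' a (τ b c))
    (hminner : ∀ (u v : H2) (c d : H), (inner ℂ (m u c) (m v d) : ℂ) = (inner ℂ u v : ℂ) * (inner ℂ c d : ℂ))
    (hmdense : Dense (Submodule.span ℂ (Set.range fun p : (H × H) × H => m (τ p.1.1 p.1.2) p.2) : Set H3))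
    -- the leg maps T ↦ T₁₂ = T ⊗ 1, T ↦ T₂₃ = 1 ⊗ T, T ↦ T₁₃ = (Σ⊗1)(1⊗T)(Σ⊗1)
    (leg12 leg23 leg13 : (H2 →L[ℂ] H2) → (H3 →L[ℂ] H3))
    (hleg12 : ∀ (T : H2 →L[ℂ] H2) (u : H2) (c : H), leg12 T (m u c) = m (T u) c)
    (hleg23 : ∀ (T : H2 →L[ℂ] H2) (a : H) (v : H2), leg23 T (m' a v) = m' a (T v))
    -- the flip unitary Σ on H ⊗ H
    (Sg : H2 →L[ℂ] H2)
    (hSg : ∀ a b : H, Sg (τ a b) = τ b a)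
    (hleg13 : ∀ T : H2 →L[ℂ] H2, leg13 T = leg12 Sg * leg23 T * leg12 Sg)
    -- the multiplicative unitary W, satisfying the pentagonal equation
    (W : H2 →L[ℂ] H2)
    (hWl : W * star W = 1) (hWr : star W * W = 1)
    (hPent : leg12 W * leg13 W * leg23 W = leg23 W * leg12 W)
    -- J : a conjugate-linear isometric involution of H
    (J : H → H)
    (hJadd : ∀ x y : H, J (x + y) = J x + J y)
    (hJsmul : ∀ (c : ℂ) (x : H), J (c • x) = (starRingEnd ℂ) c • J x)
    (hJnorm : ∀ x : H, ‖J x‖ = ‖x‖)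
    (hJinv : ∀ x : H, J (J x) = x)
    -- Jh : a conjugate-linear isometric involution of H
    (Jh : H → H)
    (hJhadd : ∀ x y : H, Jh (x + y) = Jh x + Jh y)
    (hJhsmul : ∀ (c : ℂ) (x : H), Jh (c • x) = (starRingEnd ℂ) c • Jh x)
    (hJhnorm : ∀ x : H, ‖Jh x‖ = ‖x‖)
    (hJhinv : ∀ x : H, Jh (Jh x) = x)
    -- JJ : the conjugate-linear involution J⊗J of H ⊗ H
    (JJ : H2 → H2)
    (hJJadd : ∀ x y : H2, JJ (x + y) = JJ x + JJ y)
    (hJJsmul : ∀ (c : ℂ) (x : H2), JJ (c • x) = (starRingEnd ℂ) c • JJ x)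
    (hJJnorm : ∀ x : H2, ‖JJ x‖ = ‖x‖)
    (hJJinv : ∀ x : H2, JJ (JJ x) = x)
    (hJJtmul : ∀ a b : H, JJ (τ a b) = τ (J a) (J b))
    -- JhJ : the conjugate-linear involution Ĵ⊗J of H ⊗ H
    (JhJ : H2 → H2)
    (hJhJadd : ∀ x y : H2, JhJ (x + y) = JhJ x + JhJ y)
    (hJhJsmul : ∀ (c : ℂ) (x : H2), JhJ (c • x) = (starRingEnd ℂ) c • JhJ x)
    (hJhJnorm : ∀ x : H2, ‖JhJ x‖ = ‖x‖)
    (hJhJinv : ∀ x : H2, JhJ (JhJ x) = x)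
    (hJhJtmul : ∀ a b : H, JhJ (τ a b) = τ (Jh a) (J b))
    -- the assumption W* = (Ĵ⊗J) W (Ĵ⊗J)
    (hWstar : ∀ x : H2, (star W) x = JhJ (W (JhJ x)))
    -- W' = (J⊗J) W (J⊗J), the commutant multiplicative unitary
    (W' : H2 →L[ℂ] H2)
    (hW' : ∀ x : H2, W' x = JJ (W (JJ x)))
    :
    leg12 W * star (leg23 W') = star (leg23 W') * leg13 W * leg12 W := by
  -- continuity of the conjugations
  have cJhJ : Continuous JhJ := cl_cont JhJ hJhJadd hJhJsmul hJhJnorm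
  have cJJ : Continuous JJ := cl_cont JJ hJJadd hJJsmul hJJnorm
  -- antiunitary inner product rules
  have iJ := anti_inner J hJadd hJsmul hJnorm
  have sJ := anti_swap J hJadd hJsmul hJnorm hJinv
  have iJh := anti_inner Jh hJhadd hJhsmul hJhnorm
  have sJJ := anti_swap JJ hJJadd hJJsmul hJJnorm hJJinv
  have sJhJ := anti_swap JhJ hJhJadd hJhJsmul hJhJnorm hJhJinv
  have sJJ' : ∀ x y : H2, (⟪x, JJ y⟫_ℂ) = ⟪y, JJ x⟫_ℂ := by
    intro x y
    calc (⟪x, JJ y⟫_ℂ) = (starRingEnd ℂ) (⟪JJ y, x⟫_ℂ) := (inner_conj_symm _ _).symm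
    _ = (starRingEnd ℂ) (⟪JJ x, y⟫_ℂ) := by rw [sJJ]
    _ = ⟪y, JJ x⟫_ℂ := inner_conj_symm _ _
  -- inner product formula for m'
  have I2 : ∀ (a b : H) (v w : H2), (⟪m' a v, m' b w⟫_ℂ) = ⟪a, b⟫_ℂ * ⟪v, w⟫_ℂ := by
    have step1 : ∀ (a b r s : H) (v : H2),
        (⟪m' a v, m' b (τ r s)⟫_ℂ) = ⟪a, b⟫_ℂ * ⟪v, τ r s⟫_ℂ := by
      intro a b r s
      refine ext_dense hτdense ?_ ?_ ?_ ?_ ?_ ?_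
      · exact Continuous.inner ((m' a).continuous) continuous_const
      · exact Continuous.mul continuous_const (Continuous.inner continuous_id continuous_const)
      · simp
      · intro x y hx hy
        simp only [map_add, inner_add_left]
        rw [hx, hy]; ring
      · intro c x hx
        simp only [map_smul, inner_smul_left]
        rw [hx]; ring
      · rintro v ⟨⟨p, q⟩, rfl⟩
        simp only
        rw [← hmm', ← hmm', hminner, hτinner, hτinner]
        ring
    intro a b v
    refine ext_dense hτdense ?_ ?_ ?_ ?_ ?_ ?_
    · exact Continuous.inner continuous_const ((m' b).continuous)
    · exact Continuous.mul continuous_const (Continuous.inner continuous_const continuous_id)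
    · simp
    · intro x y hx hy
      simp only [map_add, inner_add_right]
      rw [hx, hy]; ring
    · intro c x hx
      simp only [map_smul, inner_smul_right]
      rw [hx]; ring
    · rintro w ⟨⟨r, s⟩, rfl⟩
      exact step1 a b r s v
  -- star of leg operators
  have O1 : ∀ T : H2 →L[ℂ] H2, star (leg12 T) = leg12 (star T) := by
    intro T
    have hgen : ∀ (a b c0 : H),
        star (leg12 T) (m (τ a b) c0) = leg12 (star T) (m (τ a b) c0) := by
      intro a b c0
      apply eq_of_inner'
      refine ext_dense hmdense ?_ ?_ ?_ ?_ ?_ ?_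
      · exact Continuous.inner continuous_id continuous_const
      · exact Continuous.inner continuous_id continuous_const
      · simp
      · intro x y hx hy
        simp only [inner_add_left]
        rw [hx, hy]
      · intro c x hx
        simp only [inner_smul_left]
        rw [hx]
      · rintro v ⟨⟨⟨d, e⟩, f0⟩, rfl⟩
        simp only
        rw [inner_star_right, hleg12, hleg12, hminner, hminner, inner_star_right]
    refine ContinuousLinearMap.ext (ext_dense hmdense
      (star (leg12 T)).continuous (leg12 (star T)).continuous (by simp) ?_ ?_ ?_)
    · intro x y hx hy
      simp only [map_add]
      rw [hx, hy]
    · intro c x hx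
      simp only [map_smul]
      rw [hx]
    · rintro v ⟨⟨⟨a, b⟩, c0⟩, rfl⟩
      exact hgen a b c0
  have O2 : ∀ T : H2 →L[ℂ] H2, star (leg23 T) = leg23 (star T) := by
    intro T
    have hgen : ∀ (a b c0 : H),
        star (leg23 T) (m (τ a b) c0) = leg23 (star T) (m (τ a b) c0) := by
      intro a b c0
      apply eq_of_inner'
      refine ext_dense hmdense ?_ ?_ ?_ ?_ ?_ ?_
      · exact Continuous.inner continuous_id continuous_const
      · exact Continuous.inner continuous_id continuous_const
      · simp
      · intro x y hx hy
        simp only [inner_add_left]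
        rw [hx, hy]
      · intro c x hx
        simp only [inner_smul_left]
        rw [hx]
      · rintro v ⟨⟨⟨d, e⟩, f0⟩, rfl⟩
        simp only
        rw [inner_star_right, hmm' d e f0, hmm' a b c0, hleg23, hleg23, I2, I2,
          inner_star_right]
    refine ContinuousLinearMap.ext (ext_dense hmdense
      (star (leg23 T)).continuous (leg23 (star T)).continuous (by simp) ?_ ?_ ?_)
    · intro x y hx hy
      simp only [map_add]
      rw [hx, hy]
    · intro c x hx
      simp only [map_smul]
      rw [hx]
    · rintro v ⟨⟨⟨a, b⟩, c0⟩, rfl⟩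
      exact hgen a b c0
  have O3 : star Sg = Sg := by
    have hgen : ∀ (a b : H), star Sg (τ a b) = Sg (τ a b) := by
      intro a b
      apply eq_of_inner'
      refine ext_dense hτdense ?_ ?_ ?_ ?_ ?_ ?_
      · exact Continuous.inner continuous_id continuous_const
      · exact Continuous.inner continuous_id continuous_const
      · simp
      · intro x y hx hy
        simp only [inner_add_left]
        rw [hx, hy]
      · intro c x hx
        simp only [inner_smul_left]
        rw [hx]
      · rintro v ⟨⟨c, d⟩, rfl⟩
        simp only
        rw [inner_star_right, hSg, hSg, hτinner, hτinner]
        ring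
    refine ContinuousLinearMap.ext (ext_dense hτdense
      (star Sg).continuous Sg.continuous (by simp) ?_ ?_ ?_)
    · intro x y hx hy
      simp only [map_add]
      rw [hx, hy]
    · intro c x hx
      simp only [map_smul]
      rw [hx]
    · rintro v ⟨⟨a, b⟩, rfl⟩
      exact hgen a b
  have hSgleg : star (leg12 Sg) = leg12 Sg := by rw [O1, O3]
  have hstar13 : star (leg13 W) = leg12 Sg * leg23 (star W) * leg12 Sg := by
    rw [hleg13, star_mul, star_mul, hSgleg, O2, mul_assoc]
  -- pointwise conjugation identities
  have P2' : ∀ x : H2, JhJ ((star W) x) = W (JhJ x) := by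
    intro x; rw [hWstar, hJhJinv]
  have P2'' : ∀ x : H2, JhJ (W x) = (star W) (JhJ x) := by
    intro x; rw [hWstar, hJhJinv]
  have P1 : ∀ x : H2, (star W') x = JJ ((star W) (JJ x)) := by
    intro x
    apply eq_of_inner'
    intro v
    calc (⟪v, (star W') x⟫_ℂ) = ⟪W' v, x⟫_ℂ := inner_star_right W' v x
    _ = ⟪JJ (W (JJ v)), x⟫_ℂ := by rw [hW']
    _ = ⟪JJ x, W (JJ v)⟫_ℂ := sJJ _ _
    _ = ⟪(star W) (JJ x), JJ v⟫_ℂ := (star_inner_left W _ _).symm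
    _ = ⟪v, JJ ((star W) (JJ x))⟫_ℂ := sJJ' _ _
  -- the cross pairing lemma : antiunitarity of (Jh ⊗ J ⊗ J) on mixed generators
  have CL : ∀ (c0 d : H) (u r : H2),
      (⟪m u c0, m' d r⟫_ℂ) = ⟪m' (Jh d) (JJ r), m (JhJ u) (J c0)⟫_ℂ := by
    have step1 : ∀ (c0 d e f0 : H) (u : H2),
        (⟪m u c0, m' d (τ e f0)⟫_ℂ) = ⟪m' (Jh d) (JJ (τ e f0)), m (JhJ u) (J c0)⟫_ℂ := by
      intro c0 d e f0
      refine ext_dense hτdense ?_ ?_ ?_ ?_ ?_ ?_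
      · exact Continuous.inner (m.flip c0).continuous continuous_const
      · exact Continuous.inner continuous_const ((m.flip (J c0)).continuous.comp cJhJ)
      · have : JhJ (0 : H2) = 0 := by
          have := hJhJsmul 0 0; simpa using this
        simp [this]
      · intro x y hx hy
        simp only [map_add, ContinuousLinearMap.add_apply, hJhJadd, inner_add_left,
          inner_add_right]
        rw [hx, hy]
      · intro c x hx
        simp only [map_smul, ContinuousLinearMap.smul_apply, hJhJsmul, inner_smul_left,
          inner_smul_right]
        rw [hx]
      · rintro u ⟨⟨p, q⟩, rfl⟩
        simp only
        rw [hJhJtmul, hJJtmul, hmm' p q c0, hmm' (Jh p) (J q) (J c0), I2, I2,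
          hτinner, hτinner, iJh, iJ, iJ]
    intro c0 d u
    refine ext_dense hτdense ?_ ?_ ?_ ?_ ?_ ?_
    · exact Continuous.inner continuous_const ((m' d).continuous)
    · exact Continuous.inner (((m' (Jh d)).continuous).comp cJJ) continuous_const
    · have : JJ (0 : H2) = 0 := by
        have := hJJsmul 0 0; simpa using this
      simp [this]
    · intro x y hx hy
      simp only [hJJadd, map_add, inner_add_left, inner_add_right]
      rw [hx, hy]
    · intro c x hx
      simp only [hJJsmul, map_smul, inner_smul_left, inner_smul_right, Complex.conj_conj]
      rw [hx]
    · rintro r ⟨⟨e, f0⟩, rfl⟩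
      exact step1 c0 d e f0 u
  -- conjugation rule for the 13-leg
  have C2 : ∀ (a0 f0 : H) (u w : H2),
      (⟪m' a0 (JJ w), leg13 W (m u f0)⟫_ℂ)
        = ⟪star (leg13 W) (m (JhJ u) (J f0)), m' (Jh a0) w⟫_ℂ := by
    have step1 : ∀ (a0 f0 r s : H) (u : H2),
        (⟪m' a0 (JJ (τ r s)), leg13 W (m u f0)⟫_ℂ)
          = ⟪star (leg13 W) (m (JhJ u) (J f0)), m' (Jh a0) (τ r s)⟫_ℂ := by
      intro a0 f0 r s
      refine ext_dense hτdense ?_ ?_ ?_ ?_ ?_ ?_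
      · exact Continuous.inner continuous_const
          ((leg13 W).continuous.comp (m.flip f0).continuous)
      · exact Continuous.inner
          ((star (leg13 W)).continuous.comp ((m.flip (J f0)).continuous.comp cJhJ))
          continuous_const
      · have : JhJ (0 : H2) = 0 := by
          have := hJhJsmul 0 0; simpa using this
        simp [this]
      · intro x y hx hy
        simp only [map_add, ContinuousLinearMap.add_apply, hJhJadd, inner_add_left,
          inner_add_right]
        rw [hx, hy]
      · intro c x hx
        simp only [map_smul, ContinuousLinearMap.smul_apply, hJhJsmul, inner_smul_left,
          inner_smul_right, Complex.conj_conj]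
        rw [hx]
      · rintro u ⟨⟨p, q⟩, rfl⟩
        simp only
        rw [hstar13, hleg13]
        simp only [ContinuousLinearMap.mul_apply]
        -- left hand side
        rw [hleg12 Sg (τ p q) f0, hSg p q, hmm' q p f0, hleg23 W q (τ p f0),
          hJJtmul r s, ← hmm' a0 (J r) (J s),
          ← star_inner_left (leg12 Sg) (m (τ a0 (J r)) (J s)) (m' q (W (τ p f0))),
          hSgleg, hleg12 Sg (τ a0 (J r)) (J s), hSg a0 (J r), hmm' (J r) a0 (J s),
          I2 (J r) q (τ a0 (J s)) (W (τ p f0))]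
        -- right hand side
        rw [hJhJtmul p q, hleg12 Sg (τ (Jh p) (J q)) (J f0), hSg (Jh p) (J q),
          hmm' (J q) (Jh p) (J f0), hleg23 (star W) (J q) (τ (Jh p) (J f0)),
          inner_star_left (leg12 Sg), hSgleg, ← hmm' (Jh a0) r s,
          hleg12 Sg (τ (Jh a0) r) s, hSg (Jh a0) r, hmm' r (Jh a0) s,
          I2 (J q) r ((star W) (τ (Jh p) (J f0))) (τ (Jh a0) s),
          ← hJhJtmul p f0, ← P2'' (τ p f0), sJhJ (W (τ p f0)) (τ (Jh a0) s),
          hJhJtmul (Jh a0) s, hJhinv a0, sJ q r]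
    intro a0 f0 u
    refine ext_dense hτdense ?_ ?_ ?_ ?_ ?_ ?_
    · exact Continuous.inner (((m' a0).continuous).comp cJJ) continuous_const
    · exact Continuous.inner continuous_const ((m' (Jh a0)).continuous)
    · have h0 : JJ (0 : H2) = 0 := by
        have := hJJsmul 0 0; simpa using this
      simp [h0]
    · intro x y hx hy
      simp only [hJJadd, map_add, inner_add_left, inner_add_right]
      rw [hx, hy]
    · intro c x hx
      simp only [hJJsmul, map_smul, inner_smul_left, inner_smul_right, Complex.conj_conj]
      rw [hx]
    · rintro w ⟨⟨r, s⟩, rfl⟩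
      exact step1 a0 f0 r s u
  -- the main matrix-coefficient identity
  have key : ∀ (a b c0 d e f0 : H),
      (⟪(leg12 W * star (leg23 W')) (m (τ a b) c0), m (τ d e) f0⟫_ℂ)
        = ⟪(star (leg23 W') * leg13 W * leg12 W) (m (τ a b) c0), m (τ d e) f0⟫_ℂ := by
    intro a b c0 d e f0
    have e1 : star (leg23 W') (m (τ a b) c0)
        = m' a (JJ ((star W) (τ (J b) (J c0)))) := by
      rw [O2, hmm' a b c0, hleg23, P1, hJJtmul]
    have lhs_eq : (⟪(leg12 W * star (leg23 W')) (m (τ a b) c0), m (τ d e) f0⟫_ℂ)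
        = (starRingEnd ℂ) (⟪m' (Jh a) (τ (J b) (J c0)),
            leg23 W (leg12 W (m (τ (Jh d) (J e)) (J f0)))⟫_ℂ) := by
      conv_lhs => rw [ContinuousLinearMap.mul_apply, e1, inner_star_left (leg12 W), O1,
        hleg12]
      rw [← inner_conj_symm (m' a (JJ ((star W) (τ (J b) (J c0)))))
        (m ((star W) (τ d e)) f0)]
      congr 1
      rw [CL f0 a ((star W) (τ d e)) (JJ ((star W) (τ (J b) (J c0)))), hJJinv,
        P2' (τ d e), hJhJtmul d e,
        ← hleg23 (star W) (Jh a) (τ (J b) (J c0)), ← O2 W,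
        ← hleg12 W (τ (Jh d) (J e)) (J f0), star_inner_left (leg23 W)]
    have rhs_eq : (⟪(star (leg23 W') * leg13 W * leg12 W) (m (τ a b) c0), m (τ d e) f0⟫_ℂ)
        = (starRingEnd ℂ) (⟪m' (Jh a) (τ (J b) (J c0)),
            leg12 W (leg13 W (leg23 W (m (τ (Jh d) (J e)) (J f0))))⟫_ℂ) := by
      conv_lhs => rw [ContinuousLinearMap.mul_apply, ContinuousLinearMap.mul_apply,
        star_inner_left (leg23 W'), hleg12, hmm' d e f0, hleg23, hW', hJJtmul e f0]
      rw [← inner_conj_symm (leg13 W (m (W (τ a b)) c0))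
        (m' d (JJ (W (τ (J e) (J f0)))))]
      congr 1
      rw [C2 d c0 (W (τ a b)) (W (τ (J e) (J f0))), P2'' (τ a b), hJhJtmul a b,
        ← hleg12 (star W) (τ (Jh a) (J b)) (J c0), ← O1 W,
        ← hleg23 W (Jh d) (τ (J e) (J f0)),
        star_inner_left (leg13 W), star_inner_left (leg12 W),
        ← hmm' (Jh d) (J e) (J f0), hmm' (Jh a) (J b) (J c0)]
    rw [lhs_eq, rhs_eq]
    have hp : leg23 W (leg12 W (m (τ (Jh d) (J e)) (J f0)))
        = leg12 W (leg13 W (leg23 W (m (τ (Jh d) (J e)) (J f0)))) := by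
      have h := congrArg (fun A : H3 →L[ℂ] H3 => A (m (τ (Jh d) (J e)) (J f0))) hPent
      simpa only [ContinuousLinearMap.mul_apply] using h.symm
    rw [hp]
  -- from matrix coefficients to vectors
  have keyv : ∀ (a b c0 : H),
      (leg12 W * star (leg23 W')) (m (τ a b) c0)
        = (star (leg23 W') * leg13 W * leg12 W) (m (τ a b) c0) := by
    intro a b c0
    apply eq_of_inner'
    refine ext_dense hmdense ?_ ?_ ?_ ?_ ?_ ?_
    · exact Continuous.inner continuous_id continuous_const
    · exact Continuous.inner continuous_id continuous_const
    · simp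
    · intro x y hx hy
      simp only [inner_add_left]
      rw [hx, hy]
    · intro c x hx
      simp only [inner_smul_left]
      rw [hx]
    · rintro v ⟨⟨⟨d, e⟩, f0⟩, rfl⟩
      simp only
      calc (⟪m (τ d e) f0, (leg12 W * star (leg23 W')) (m (τ a b) c0)⟫_ℂ)
          = (starRingEnd ℂ)
              (⟪(leg12 W * star (leg23 W')) (m (τ a b) c0), m (τ d e) f0⟫_ℂ) :=
            (inner_conj_symm _ _).symm
        _ = (starRingEnd ℂ)
              (⟪(star (leg23 W') * leg13 W * leg12 W) (m (τ a b) c0), m (τ d e) f0⟫_ℂ) := by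
            rw [key a b c0 d e f0]
        _ = ⟪m (τ d e) f0, (star (leg23 W') * leg13 W * leg12 W) (m (τ a b) c0)⟫_ℂ :=
            inner_conj_symm _ _
  -- conclude
  refine ContinuousLinearMap.ext (ext_dense hmdense
    (leg12 W * star (leg23 W')).continuous
    (star (leg23 W') * leg13 W * leg12 W).continuous (by simp) ?_ ?_ ?_)
  · intro x y hx hy
    simp only [map_add]
    rw [hx, hy]
  · intro c x hx
    simp only [map_smul]
    rw [hx]
  · rintro v ⟨⟨⟨a, b⟩, c0⟩, rfl⟩
    exact keyv a b c0
end
end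

section
/- W₂₃ W'₁₂* = W'₁₂* W'₁₃* W₂₃ as bounded operators on H⊗H⊗H. -/
noncomputable section

theorem stmt_1
    {H H2 H3 : Type*}
    [NormedAddCommGroup H] [InnerProductSpace ℂ H] [CompleteSpace H]
    [NormedAddCommGroup H2] [InnerProductSpace ℂ H2] [CompleteSpace H2]
    [NormedAddCommGroup H3] [InnerProductSpace ℂ H3] [CompleteSpace H3]
    -- the tensor map H × H → H ⊗ H = H2
    (τ : H →L[ℂ] H →L[ℂ] H2)
    (hτinner : ∀ a b c d : H, (inner ℂ (τ a b) (τ c d) : ℂ) = (inner ℂ a c : ℂ) * (inner ℂ b d : ℂ))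
    (hτdense : Dense (Submodule.span ℂ (Set.range fun p : H × H => τ p.1 p.2) : Set H2))
    -- the tensor maps (H ⊗ H) × H → H ⊗ H ⊗ H = H3 and H × (H ⊗ H) → H ⊗ H ⊗ H
    (m : H2 →L[ℂ] H →L[ℂ] H3)
    (m' : H →L[ℂ] H2 →L[ℂ] H3)
    (hmm' : ∀ a b c : H, m (τ a b) c = m' a (τ b c))
    (hminner : ∀ (u v : H2) (c d : H), (inner ℂ (m u c) (m v d) : ℂ) = (inner ℂ u v : ℂ) * (inner ℂ c d : ℂ))
    (hmdense : Dense (Submodule.span ℂ (Set.range fun p : (H × H) × H => m (τ p.1.1 p.1.2) p.2) : Set H3))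
    -- the leg maps T ↦ T₁₂ = T ⊗ 1, T ↦ T₂₃ = 1 ⊗ T, T ↦ T₁₃ = (Σ⊗1)(1⊗T)(Σ⊗1)
    (leg12 leg23 leg13 : (H2 →L[ℂ] H2) → (H3 →L[ℂ] H3))
    (hleg12 : ∀ (T : H2 →L[ℂ] H2) (u : H2) (c : H), leg12 T (m u c) = m (T u) c)
    (hleg23 : ∀ (T : H2 →L[ℂ] H2) (a : H) (v : H2), leg23 T (m' a v) = m' a (T v))
    -- the flip unitary Σ on H ⊗ H
    (Sg : H2 →L[ℂ] H2)
    (hSg : ∀ a b : H, Sg (τ a b) = τ b a)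
    (hleg13 : ∀ T : H2 →L[ℂ] H2, leg13 T = leg12 Sg * leg23 T * leg12 Sg)
    -- the multiplicative unitary W, satisfying the pentagonal equation
    (W : H2 →L[ℂ] H2)
    (hWl : W * star W = 1) (hWr : star W * W = 1)
    (hPent : leg12 W * leg13 W * leg23 W = leg23 W * leg12 W)
    -- J : a conjugate-linear isometric involution of H
    (J : H → H)
    (hJadd : ∀ x y : H, J (x + y) = J x + J y)
    (hJsmul : ∀ (c : ℂ) (x : H), J (c • x) = (starRingEnd ℂ) c • J x)
    (hJnorm : ∀ x : H, ‖J x‖ = ‖x‖)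
    (hJinv : ∀ x : H, J (J x) = x)
    -- Jh : a conjugate-linear isometric involution of H
    (Jh : H → H)
    (hJhadd : ∀ x y : H, Jh (x + y) = Jh x + Jh y)
    (hJhsmul : ∀ (c : ℂ) (x : H), Jh (c • x) = (starRingEnd ℂ) c • Jh x)
    (hJhnorm : ∀ x : H, ‖Jh x‖ = ‖x‖)
    (hJhinv : ∀ x : H, Jh (Jh x) = x)
    -- JJ : the conjugate-linear involution J⊗J of H ⊗ H
    (JJ : H2 → H2)
    (hJJadd : ∀ x y : H2, JJ (x + y) = JJ x + JJ y)
    (hJJsmul : ∀ (c : ℂ) (x : H2), JJ (c • x) = (starRingEnd ℂ) c • JJ x)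
    (hJJnorm : ∀ x : H2, ‖JJ x‖ = ‖x‖)
    (hJJinv : ∀ x : H2, JJ (JJ x) = x)
    (hJJtmul : ∀ a b : H, JJ (τ a b) = τ (J a) (J b))
    -- JhJ : the conjugate-linear involution Ĵ⊗J of H ⊗ H
    (JhJ : H2 → H2)
    (hJhJadd : ∀ x y : H2, JhJ (x + y) = JhJ x + JhJ y)
    (hJhJsmul : ∀ (c : ℂ) (x : H2), JhJ (c • x) = (starRingEnd ℂ) c • JhJ x)
    (hJhJnorm : ∀ x : H2, ‖JhJ x‖ = ‖x‖)
    (hJhJinv : ∀ x : H2, JhJ (JhJ x) = x)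
    (hJhJtmul : ∀ a b : H, JhJ (τ a b) = τ (Jh a) (J b))
    -- the assumption W* = (Ĵ⊗J) W (Ĵ⊗J)
    (hWstar : ∀ x : H2, (star W) x = JhJ (W (JhJ x)))
    -- W' = (J⊗J) W (J⊗J), the commutant multiplicative unitary
    (W' : H2 →L[ℂ] H2)
    (hW' : ∀ x : H2, W' x = JJ (W (JJ x)))
    :
    leg23 W * star (leg12 W') = star (leg12 W') * star (leg13 W') * leg23 W := by

  -- extensionality by density, for operators on H2 and H3
  have ext2 : ∀ (A B : H2 →L[ℂ] H2), (∀ a b : H, A (τ a b) = B (τ a b)) → A = B := by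
    intro A B h
    refine ContinuousLinearMap.ext_on hτdense ?_
    rintro z ⟨⟨a, b⟩, rfl⟩
    exact h a b
  have ext3 : ∀ (A B : H3 →L[ℂ] H3), (∀ a b c : H, A (m (τ a b) c) = B (m (τ a b) c)) → A = B := by
    intro A B h
    refine ContinuousLinearMap.ext_on hmdense ?_
    rintro z ⟨⟨⟨a, b⟩, c⟩, rfl⟩
    exact h a b c
  -- extensionality by density for vectors
  have vext2 : ∀ x y : H2, (∀ p q : H, (inner ℂ (τ p q) x : ℂ) = inner ℂ (τ p q) y) → x = y := by
    intro x y h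
    have hf : (innerSL ℂ x : H2 →L[ℂ] ℂ) = innerSL ℂ y := by
      refine ContinuousLinearMap.ext_on hτdense ?_
      rintro z ⟨⟨p, q⟩, rfl⟩
      simp only [innerSL_apply_apply]
      rw [← inner_conj_symm, h p q, inner_conj_symm]
    have h1 : (inner ℂ x (x - y) : ℂ) = inner ℂ y (x - y) := by
      have := congrArg (fun f : H2 →L[ℂ] ℂ => f (x - y)) hf
      simpa only [innerSL_apply_apply] using this
    have h0 : (inner ℂ (x - y) (x - y) : ℂ) = 0 := by
      rw [inner_sub_left, h1, sub_self]
    exact sub_eq_zero.mp (inner_self_eq_zero.mp h0)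
  have vext3 : ∀ x y : H3, (∀ p q r : H, (inner ℂ (m (τ p q) r) x : ℂ) = inner ℂ (m (τ p q) r) y) → x = y := by
    intro x y h
    have hf : (innerSL ℂ x : H3 →L[ℂ] ℂ) = innerSL ℂ y := by
      refine ContinuousLinearMap.ext_on hmdense ?_
      rintro z ⟨⟨⟨p, q⟩, r⟩, rfl⟩
      simp only [innerSL_apply_apply]
      rw [← inner_conj_symm, h p q r, inner_conj_symm]
    have h1 : (inner ℂ x (x - y) : ℂ) = inner ℂ y (x - y) := by
      have := congrArg (fun f : H3 →L[ℂ] ℂ => f (x - y)) hf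
      simpa only [innerSL_apply_apply] using this
    have h0 : (inner ℂ (x - y) (x - y) : ℂ) = 0 := by
      rw [inner_sub_left, h1, sub_self]
    exact sub_eq_zero.mp (inner_self_eq_zero.mp h0)
  -- the linear isometries V = JJ ∘ JhJ and V' = JhJ ∘ JJ
  let Vl : H2 →ₗᵢ[ℂ] H2 :=
    { toFun := fun x => JJ (JhJ x)
      map_add' := by
        intro x y
        show JJ (JhJ (x + y)) = JJ (JhJ x) + JJ (JhJ y)
        rw [hJhJadd, hJJadd]
      map_smul' := by
        intro c x
        show JJ (JhJ (c • x)) = (RingHom.id ℂ) c • JJ (JhJ x)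
        simp only [RingHom.id_apply, hJhJsmul, hJJsmul, Complex.conj_conj]
      norm_map' := by
        intro x
        show ‖JJ (JhJ x)‖ = ‖x‖
        rw [hJJnorm, hJhJnorm] }
  let V'l : H2 →ₗᵢ[ℂ] H2 :=
    { toFun := fun x => JhJ (JJ x)
      map_add' := by
        intro x y
        show JhJ (JJ (x + y)) = JhJ (JJ x) + JhJ (JJ y)
        rw [hJJadd, hJhJadd]
      map_smul' := by
        intro c x
        show JhJ (JJ (c • x)) = (RingHom.id ℂ) c • JhJ (JJ x)
        simp only [RingHom.id_apply, hJJsmul, hJhJsmul, Complex.conj_conj]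
      norm_map' := by
        intro x
        show ‖JhJ (JJ x)‖ = ‖x‖
        rw [hJhJnorm, hJJnorm] }
  let V : H2 →L[ℂ] H2 := Vl.toContinuousLinearMap
  let V' : H2 →L[ℂ] H2 := V'l.toContinuousLinearMap
  have hVapp : ∀ y : H2, V y = JJ (JhJ y) := fun _ => rfl
  have hV'app : ∀ y : H2, V' y = JhJ (JJ y) := fun _ => rfl
  have hVV'x : ∀ x : H2, V (V' x) = x := by
    intro x; rw [hV'app, hVapp, hJhJinv, hJJinv]
  have hV'Vx : ∀ x : H2, V' (V x) = x := by
    intro x; rw [hVapp, hV'app, hJJinv, hJhJinv]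
  have hV'V : V' * V = 1 := by
    apply ContinuousLinearMap.ext; intro x
    rw [ContinuousLinearMap.mul_apply, ContinuousLinearMap.one_apply, hV'Vx]
  have hstarV : star V = V' := by
    rw [ContinuousLinearMap.star_eq_adjoint]
    refine ((ContinuousLinearMap.eq_adjoint_iff V' V).mpr ?_).symm
    intro x y
    calc (inner ℂ (V' x) y : ℂ) = inner ℂ (V (V' x)) (V y) := (Vl.inner_map_map (V' x) y).symm
      _ = inner ℂ x (V y) := by rw [hVV'x x]
  have hstarV' : star V' = V := by rw [← hstarV, star_star]
  -- W' = V ∘ star W ∘ V'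
  have hW'V : W' = V * (star W * V') := by
    apply ContinuousLinearMap.ext; intro x
    simp only [ContinuousLinearMap.mul_apply]
    rw [hW' x, hWstar, hV'app, hVapp, hJhJinv, hJhJinv]
  have hstarW' : star W' = V * (W * V') := by
    rw [hW'V, star_mul, star_mul, star_star, hstarV, hstarV', mul_assoc]
  -- algebra of the leg maps
  have L_mul : ∀ X Y : H2 →L[ℂ] H2, leg12 (X * Y) = leg12 X * leg12 Y := by
    intro X Y; apply ext3; intro a b c
    simp only [ContinuousLinearMap.mul_apply, hleg12]
  have R_mul : ∀ X Y : H2 →L[ℂ] H2, leg23 (X * Y) = leg23 X * leg23 Y := by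
    intro X Y; apply ext3; intro a b c
    rw [hmm' a b c]
    simp only [ContinuousLinearMap.mul_apply, hleg23]
  have L_one : leg12 (1 : H2 →L[ℂ] H2) = 1 := by
    apply ext3; intro a b c
    simp only [hleg12, ContinuousLinearMap.one_apply]
  -- star compatibility of the legs
  have starL : ∀ X : H2 →L[ℂ] H2, star (leg12 X) = leg12 (star X) := by
    intro X; apply ext3; intro a b c
    apply vext3; intro p q r
    rw [ContinuousLinearMap.star_eq_adjoint (leg12 X), ContinuousLinearMap.adjoint_inner_right,
      hleg12, hleg12, hminner, hminner,
      ContinuousLinearMap.star_eq_adjoint X, ContinuousLinearMap.adjoint_inner_right]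
  -- the inner ℂ product formula for m'
  have step1 : ∀ (a p b c : H) (w : H2),
      (inner ℂ (m' a (τ b c)) (m' p w) : ℂ) = (inner ℂ a p : ℂ) * inner ℂ (τ b c) w := by
    intro a p b c
    have hcl : ((innerSL ℂ (m' a (τ b c))).comp (m' p) : H2 →L[ℂ] ℂ)
        = (inner ℂ a p : ℂ) • (innerSL ℂ (τ b c) : H2 →L[ℂ] ℂ) := by
      refine ContinuousLinearMap.ext_on hτdense ?_
      rintro z ⟨⟨s, t⟩, rfl⟩
      simp only [ContinuousLinearMap.comp_apply, ContinuousLinearMap.smul_apply, innerSL_apply_apply,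
        smul_eq_mul]
      calc (inner ℂ (m' a (τ b c)) (m' p (τ s t)) : ℂ)
          = inner ℂ (m (τ a b) c) (m (τ p s) t) := by rw [hmm' a b c, hmm' p s t]
        _ = (inner ℂ (τ a b) (τ p s) : ℂ) * inner ℂ c t := hminner _ _ _ _
        _ = (inner ℂ a p : ℂ) * inner ℂ (τ b c) (τ s t) := by rw [hτinner, hτinner]; ring
    intro w
    have := ContinuousLinearMap.ext_iff.mp hcl w
    simpa only [ContinuousLinearMap.comp_apply, ContinuousLinearMap.smul_apply, innerSL_apply_apply,
      smul_eq_mul] using this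
  have innerm' : ∀ (p a : H) (w v : H2),
      (inner ℂ (m' p w) (m' a v) : ℂ) = (inner ℂ p a : ℂ) * inner ℂ w v := by
    intro p a w
    have hcl : ((innerSL ℂ (m' p w)).comp (m' a) : H2 →L[ℂ] ℂ)
        = (inner ℂ p a : ℂ) • (innerSL ℂ w : H2 →L[ℂ] ℂ) := by
      refine ContinuousLinearMap.ext_on hτdense ?_
      rintro z ⟨⟨b, c⟩, rfl⟩
      simp only [ContinuousLinearMap.comp_apply, ContinuousLinearMap.smul_apply, innerSL_apply_apply,
        smul_eq_mul]
      have h := congrArg (starRingEnd ℂ) (step1 a p b c w)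
      simp only [map_mul, inner_conj_symm] at h
      exact h
    intro v
    have := ContinuousLinearMap.ext_iff.mp hcl v
    simpa only [ContinuousLinearMap.comp_apply, ContinuousLinearMap.smul_apply, innerSL_apply_apply,
      smul_eq_mul] using this
  have starR : ∀ X : H2 →L[ℂ] H2, star (leg23 X) = leg23 (star X) := by
    intro X; apply ext3; intro a b c
    apply vext3; intro p q r
    rw [ContinuousLinearMap.star_eq_adjoint (leg23 X), ContinuousLinearMap.adjoint_inner_right,
      hmm' p q r, hmm' a b c, hleg23, hleg23, innerm', innerm',
      ContinuousLinearMap.star_eq_adjoint X, ContinuousLinearMap.adjoint_inner_right]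
  -- the flip
  have starSg : star Sg = Sg := by
    apply ext2; intro a b
    apply vext2; intro p q
    rw [ContinuousLinearMap.star_eq_adjoint Sg, ContinuousLinearMap.adjoint_inner_right,
      hSg, hSg, hτinner, hτinner]
    ring
  have starS : star (leg12 Sg) = leg12 Sg := by rw [starL, starSg]
  -- action of V and V' on elementary tensors
  have hVtau : ∀ a b : H, V (τ a b) = τ (J (Jh a)) b := by
    intro a b; rw [hVapp, hJhJtmul, hJJtmul, hJinv]
  have hV'tau : ∀ a b : H, V' (τ a b) = τ (Jh (J a)) b := by
    intro a b; rw [hV'app, hJJtmul, hJhJtmul, hJinv]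
  have Lauxp : ∀ (a : H) (w : H2), leg12 V (m' a w) = m' (J (Jh a)) w := by
    intro a
    have hcl : (leg12 V).comp (m' a) = m' (J (Jh a)) := by
      refine ContinuousLinearMap.ext_on hτdense ?_
      rintro z ⟨⟨b, c⟩, rfl⟩
      simp only [ContinuousLinearMap.comp_apply]
      calc leg12 V (m' a (τ b c)) = leg12 V (m (τ a b) c) := by rw [hmm' a b c]
        _ = m (V (τ a b)) c := hleg12 _ _ _
        _ = m (τ (J (Jh a)) b) c := by rw [hVtau]
        _ = m' (J (Jh a)) (τ b c) := hmm' _ _ _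
    intro w
    have := ContinuousLinearMap.ext_iff.mp hcl w
    simpa only [ContinuousLinearMap.comp_apply] using this
  have Laux'p : ∀ (a : H) (w : H2), leg12 V' (m' a w) = m' (Jh (J a)) w := by
    intro a
    have hcl : (leg12 V').comp (m' a) = m' (Jh (J a)) := by
      refine ContinuousLinearMap.ext_on hτdense ?_
      rintro z ⟨⟨b, c⟩, rfl⟩
      simp only [ContinuousLinearMap.comp_apply]
      calc leg12 V' (m' a (τ b c)) = leg12 V' (m (τ a b) c) := by rw [hmm' a b c]
        _ = m (V' (τ a b)) c := hleg12 _ _ _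
        _ = m (τ (Jh (J a)) b) c := by rw [hV'tau]
        _ = m' (Jh (J a)) (τ b c) := hmm' _ _ _
    intro w
    have := ContinuousLinearMap.ext_iff.mp hcl w
    simpa only [ContinuousLinearMap.comp_apply] using this
  -- leg12 V commutes with leg23 W
  have commV : leg12 V * leg23 W = leg23 W * leg12 V := by
    apply ext3; intro a b c
    calc (leg12 V * leg23 W) (m (τ a b) c)
        = leg12 V (leg23 W (m' a (τ b c))) := by
          rw [ContinuousLinearMap.mul_apply, hmm' a b c]
      _ = m' (J (Jh a)) (W (τ b c)) := by rw [hleg23, Lauxp]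
      _ = leg23 W (m' (J (Jh a)) (τ b c)) := (hleg23 _ _ _).symm
      _ = (leg23 W * leg12 V) (m (τ a b) c) := by
          rw [ContinuousLinearMap.mul_apply, hmm' a b c, Lauxp]
  have commV' : leg12 V' * leg23 W = leg23 W * leg12 V' := by
    apply ext3; intro a b c
    calc (leg12 V' * leg23 W) (m (τ a b) c)
        = leg12 V' (leg23 W (m' a (τ b c))) := by
          rw [ContinuousLinearMap.mul_apply, hmm' a b c]
      _ = m' (Jh (J a)) (W (τ b c)) := by rw [hleg23, Laux'p]
      _ = leg23 W (m' (Jh (J a)) (τ b c)) := (hleg23 _ _ _).symm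
      _ = (leg23 W * leg12 V') (m (τ a b) c) := by
          rw [ContinuousLinearMap.mul_apply, hmm' a b c, Laux'p]
  -- flip intertwines leg23 V with leg12 V
  have SQ : leg12 Sg * leg23 V = leg12 V * leg12 Sg := by
    apply ext3; intro a b c
    calc (leg12 Sg * leg23 V) (m (τ a b) c)
        = leg12 Sg (leg23 V (m' a (τ b c))) := by
          rw [ContinuousLinearMap.mul_apply, hmm' a b c]
      _ = leg12 Sg (m' a (τ (J (Jh b)) c)) := by rw [hleg23, hVtau]
      _ = m (Sg (τ a (J (Jh b)))) c := by rw [← hmm' a (J (Jh b)) c, hleg12]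
      _ = m (τ (J (Jh b)) a) c := by rw [hSg]
      _ = (leg12 V * leg12 Sg) (m (τ a b) c) := by
          rw [ContinuousLinearMap.mul_apply, hleg12, hSg, hleg12, hVtau]
  have Q'S : leg23 V' * leg12 Sg = leg12 Sg * leg12 V' := by
    apply ext3; intro a b c
    calc (leg23 V' * leg12 Sg) (m (τ a b) c)
        = leg23 V' (m (τ b a) c) := by
          rw [ContinuousLinearMap.mul_apply, hleg12, hSg]
      _ = m' b (τ (Jh (J a)) c) := by rw [hmm' b a c, hleg23, hV'tau]
      _ = m (τ b (Jh (J a))) c := (hmm' b (Jh (J a)) c).symm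
      _ = (leg12 Sg * leg12 V') (m (τ a b) c) := by
          rw [ContinuousLinearMap.mul_apply, hleg12, hV'tau, hleg12, hSg]
  -- cancellation
  have hP'P : leg12 V' * leg12 V = 1 := by rw [← L_mul, hV'V, L_one]
  -- expressions for the two starred legs of W'
  have e1 : star (leg12 W') = leg12 V * (leg12 W * leg12 V') := by
    rw [starL, hstarW', L_mul, L_mul]
  have e2 : star (leg13 W') = leg12 Sg * (leg23 V * (leg23 W * (leg23 V' * leg12 Sg))) := by
    rw [hleg13, star_mul, star_mul, starS, starR, hstarW', R_mul, R_mul]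
    simp only [mul_assoc]
  -- rewriting helpers
  have wz2 : ∀ {X Y U Vv : H3 →L[ℂ] H3}, X * Y = U * Vv → ∀ Z, X * (Y * Z) = U * (Vv * Z) := by
    intro X Y U Vv h Z; rw [← mul_assoc, h, mul_assoc]
  have cz : ∀ {X Y : H3 →L[ℂ] H3}, X * Y = 1 → ∀ Z, X * (Y * Z) = Z := by
    intro X Y h Z; rw [← mul_assoc, h, one_mul]
  -- the pentagon, normalized
  have pent0 : leg23 W * leg12 W
      = leg12 W * (leg12 Sg * (leg23 W * (leg12 Sg * leg23 W))) := by
    have h := hPent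
    rw [hleg13] at h
    simp only [mul_assoc] at h
    exact h.symm
  -- final assembly
  rw [e1, e2]
  simp only [mul_assoc]
  rw [wz2 commV.symm, wz2 SQ, cz hP'P, wz2 Q'S, commV', wz2 pent0]
  simp only [mul_assoc]
end
end

section
/- W'₁₃ W₂₃ = W'₁₂* W'₂₃ W'₁₂ W'₂₃* W₂₃ as bounded operators on H⊗H⊗H. -/
noncomputable section

open scoped ComplexConjugate

private lemma norm_eq_of_inner_self_eq {E F : Type*} [NormedAddCommGroup E]
    [InnerProductSpace ℂ E] [NormedAddCommGroup F] [InnerProductSpace ℂ F] {x : E} {y : F}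
    (h : (inner ℂ x x : ℂ) = (inner ℂ y y : ℂ)) : ‖x‖ = ‖y‖ := by
  rw [inner_self_eq_norm_sq_to_K (𝕜 := ℂ) x, inner_self_eq_norm_sq_to_K (𝕜 := ℂ) y] at h
  have hR : (‖x‖ : ℝ) ^ 2 = (‖y‖ : ℝ) ^ 2 := by exact_mod_cast h
  rw [← Real.sqrt_sq (norm_nonneg x), ← Real.sqrt_sq (norm_nonneg y), hR]

private lemma ext_dense_span {E F : Type*} [NormedAddCommGroup E] [NormedSpace ℂ E]
    [NormedAddCommGroup F] [NormedSpace ℂ F] (s : Set E)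
    (hd : Dense ((Submodule.span ℂ s : Submodule ℂ E) : Set E))
    (σ : ℂ → ℂ) {f g : E → F} (hfc : Continuous f) (hgc : Continuous g)
    (hf0 : f 0 = 0) (hg0 : g 0 = 0)
    (hfa : ∀ x y, f (x + y) = f x + f y) (hga : ∀ x y, g (x + y) = g x + g y)
    (hfs : ∀ (c : ℂ) (x : E), f (c • x) = σ c • f x)
    (hgs : ∀ (c : ℂ) (x : E), g (c • x) = σ c • g x)
    (h : ∀ x ∈ s, f x = g x) : f = g := by
  refine hfc.ext_on hd hgc ?_
  intro x hx
  have hx' : x ∈ Submodule.span ℂ s := hx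
  clear hx
  induction hx' using Submodule.span_induction with
  | mem x hxs => exact h x hxs
  | zero => show f 0 = g 0; rw [hf0, hg0]
  | add a b _ _ iha ihb => show f (a + b) = g (a + b); rw [hfa, hga, iha, ihb]
  | smul c a _ ih => show f (c • a) = g (c • a); rw [hfs, hgs, ih]

private lemma clm_ext_dense {E F : Type*} [NormedAddCommGroup E] [NormedSpace ℂ E]
    [NormedAddCommGroup F] [NormedSpace ℂ F] (s : Set E)
    (hd : Dense ((Submodule.span ℂ s : Submodule ℂ E) : Set E))
    {A B : E →L[ℂ] F} (h : ∀ x ∈ s, A x = B x) : A = B := by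
  have := ext_dense_span s hd (fun c => c) A.continuous B.continuous (map_zero A) (map_zero B)
    (map_add A) (map_add B) (fun c x => A.map_smul c x) (fun c x => B.map_smul c x) h
  exact ContinuousLinearMap.coeFn_injective this

private lemma antiunitary_inner {E : Type*} [NormedAddCommGroup E] [InnerProductSpace ℂ E]
    {J : E → E} (hadd : ∀ x y, J (x + y) = J x + J y)
    (hsmul : ∀ (c : ℂ) (x : E), J (c • x) = (starRingEnd ℂ) c • J x)
    (hnorm : ∀ x, ‖J x‖ = ‖x‖) (x y : E) :
    (inner ℂ (J x) (J y) : ℂ) = (inner ℂ y x : ℂ) := by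
  have hneg : ∀ z, J (-z) = -J z := by
    intro z; rw [← neg_one_smul ℂ z, hsmul]; simp
  have hsub : ∀ a b, J (a - b) = J a - J b := by
    intro a b; rw [sub_eq_add_neg, hadd, hneg, ← sub_eq_add_neg]
  have e1 : ‖J x + J y‖ = ‖y + x‖ := by rw [← hadd, hnorm, add_comm]
  have e2 : ‖J x - J y‖ = ‖y - x‖ := by rw [← hsub, hnorm, norm_sub_rev]
  have e3 : ‖J x - Complex.I • J y‖ = ‖y - Complex.I • x‖ := by
    have h1 : J x - Complex.I • J y = J (x + Complex.I • y) := by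
      rw [hadd, hsmul, Complex.conj_I, neg_smul, ← sub_eq_add_neg]
    have h2 : y - Complex.I • x = (-Complex.I) • (x + Complex.I • y) := by
      rw [smul_add, smul_smul, neg_mul, Complex.I_mul_I, neg_neg, one_smul, neg_smul,
        ← sub_eq_neg_add]
    rw [h1, hnorm, h2, norm_smul]
    simp
  have e4 : ‖J x + Complex.I • J y‖ = ‖y + Complex.I • x‖ := by
    have h1 : J x + Complex.I • J y = J (x - Complex.I • y) := by
      rw [hsub, hsmul, Complex.conj_I, neg_smul, sub_neg_eq_add]
    have h2 : y + Complex.I • x = Complex.I • (x - Complex.I • y) := by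
      rw [smul_sub, smul_smul, Complex.I_mul_I, neg_one_smul, sub_neg_eq_add, add_comm]
    rw [h1, hnorm, h2, norm_smul]
    simp
  rw [inner_eq_sum_norm_sq_div_four, inner_eq_sum_norm_sq_div_four]
  simp only [RCLike.I_to_complex]
  rw [e1, e2, e3, e4]
open scoped ComplexConjugate

section conjext

variable {E : Type*} [NormedAddCommGroup E] [InnerProductSpace ℂ E]
variable {ι : Type*} (gen : ι → E) (σ : ι → ι)

private def SmF (l : ι →₀ ℂ) : E := l.sum fun p c => c • gen p
private def TmF (l : ι →₀ ℂ) : E := l.sum fun p c => (starRingEnd ℂ) c • gen (σ p)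

private lemma SmF_sub (l l' : ι →₀ ℂ) : SmF gen (l - l') = SmF gen l - SmF gen l' := by
  unfold SmF; exact Finsupp.sum_sub_index fun a b₁ b₂ => sub_smul b₁ b₂ (gen a)

private lemma SmF_add (l l' : ι →₀ ℂ) : SmF gen (l + l') = SmF gen l + SmF gen l' := by
  unfold SmF
  exact Finsupp.sum_add_index' (fun a => zero_smul ℂ (gen a)) fun a b₁ b₂ => add_smul b₁ b₂ (gen a)

private lemma SmF_smul (c : ℂ) (l : ι →₀ ℂ) : SmF gen (c • l) = c • SmF gen l := by
  unfold SmF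
  rw [Finsupp.sum_smul_index' (h0 := fun i => zero_smul ℂ (gen i))]
  simp only [smul_eq_mul, mul_smul]
  rw [Finsupp.smul_sum]

private lemma TmF_sub (l l' : ι →₀ ℂ) : TmF gen σ (l - l') = TmF gen σ l - TmF gen σ l' := by
  unfold TmF
  exact Finsupp.sum_sub_index fun a b₁ b₂ => by rw [map_sub, sub_smul]

private lemma TmF_add (l l' : ι →₀ ℂ) : TmF gen σ (l + l') = TmF gen σ l + TmF gen σ l' := by
  unfold TmF
  exact Finsupp.sum_add_index' (fun a => by simp) fun a b₁ b₂ => by rw [map_add, add_smul]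

private lemma TmF_smul (c : ℂ) (l : ι →₀ ℂ) :
    TmF gen σ (c • l) = (starRingEnd ℂ) c • TmF gen σ l := by
  unfold TmF
  rw [Finsupp.sum_smul_index' (h0 := fun i => by simp)]
  simp only [smul_eq_mul, map_mul, mul_smul]
  rw [Finsupp.smul_sum]

private lemma TmF_inner
    (hinner : ∀ p q, (inner ℂ (gen (σ p)) (gen (σ q)) : ℂ) = (inner ℂ (gen q) (gen p) : ℂ))
    (l l' : ι →₀ ℂ) :
    (inner ℂ (TmF gen σ l) (TmF gen σ l') : ℂ) = (inner ℂ (SmF gen l') (SmF gen l) : ℂ) := by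
  unfold TmF SmF Finsupp.sum
  rw [sum_inner, sum_inner]
  simp only [inner_sum]
  rw [Finset.sum_comm]
  refine Finset.sum_congr rfl fun q _ => Finset.sum_congr rfl fun p _ => ?_
  simp only [inner_smul_left, inner_smul_right, Complex.conj_conj]
  rw [hinner p q]
  ring

private lemma TmF_welldef
    (hinner : ∀ p q, (inner ℂ (gen (σ p)) (gen (σ q)) : ℂ) = (inner ℂ (gen q) (gen p) : ℂ))
    {l l' : ι →₀ ℂ} (h : SmF gen l = SmF gen l') : TmF gen σ l = TmF gen σ l' := by
  have h0 : SmF gen (l - l') = 0 := by rw [SmF_sub, h, sub_self]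
  have h1 : (inner ℂ (TmF gen σ (l - l')) (TmF gen σ (l - l')) : ℂ) = 0 := by
    rw [TmF_inner gen σ hinner, h0, inner_zero_left]
  have h2 := inner_self_eq_zero.mp h1
  rw [TmF_sub] at h2
  exact sub_eq_zero.mp h2

private lemma exists_conj_extension [CompleteSpace E]
    (hσ : ∀ p, σ (σ p) = p)
    (hinner : ∀ p q, (inner ℂ (gen (σ p)) (gen (σ q)) : ℂ) = (inner ℂ (gen q) (gen p) : ℂ))
    (hd : Dense ((Submodule.span ℂ (Set.range gen) : Submodule ℂ E) : Set E)) :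
    ∃ K : E → E, Continuous K ∧ (∀ p, K (gen p) = gen (σ p)) ∧
      (∀ x y, K (x + y) = K x + K y) ∧
      (∀ (c : ℂ) (x : E), K (c • x) = (starRingEnd ℂ) c • K x) ∧
      (∀ x, K (K x) = x) := by
  classical
  have hσinj : Function.Injective σ := Function.LeftInverse.injective hσ
  have hmem : ∀ x ∈ Submodule.span ℂ (Set.range gen), ∃ l : ι →₀ ℂ, SmF gen l = x := fun x hx =>
    Finsupp.mem_span_range_iff_exists_finsupp.mp hx
  set fR : E → E :=
    fun x => if h : ∃ l : ι →₀ ℂ, SmF gen l = x then TmF gen σ h.choose else 0 with hfRdef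
  have hfR : ∀ l : ι →₀ ℂ, fR (SmF gen l) = TmF gen σ l := by
    intro l
    have hex : ∃ l' : ι →₀ ℂ, SmF gen l' = SmF gen l := ⟨l, rfl⟩
    simp only [hfRdef]
    rw [dif_pos hex]
    exact TmF_welldef gen σ hinner hex.choose_spec
  have hdense' : DenseRange ((↑) : (Submodule.span ℂ (Set.range gen)) → E) := by
    rw [DenseRange, Subtype.range_coe]
    exact hd
  have hui : IsUniformInducing ((↑) : (Submodule.span ℂ (Set.range gen)) → E) :=
    isometry_subtype_coe.isUniformInducing
  set g : (Submodule.span ℂ (Set.range gen)) → E := fun d => fR (d : E) with hgdef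
  have hnormTS : ∀ l : ι →₀ ℂ, ‖TmF gen σ l‖ = ‖SmF gen l‖ := fun l =>
    norm_eq_of_inner_self_eq (by rw [TmF_inner gen σ hinner])
  have hgiso : Isometry g := by
    apply Isometry.of_dist_eq
    intro d d'
    obtain ⟨l, hl⟩ := hmem _ d.2
    obtain ⟨l', hl'⟩ := hmem _ d'.2
    simp only [hgdef]
    rw [Subtype.dist_eq, dist_eq_norm, dist_eq_norm, ← hl, ← hl', hfR, hfR, ← TmF_sub, ← SmF_sub,
      hnormTS]
  have hguc : UniformContinuous g := hgiso.uniformContinuous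
  set K : E → E := (hui.isDenseInducing hdense').extend g with hKdef
  have hKval : ∀ d : (Submodule.span ℂ (Set.range gen)), K (d : E) = fR (d : E) := fun d =>
    uniformly_extend_of_ind hui hdense' hguc d
  have hKc : Continuous K := (uniformContinuous_uniformly_extend hui hdense' hguc).continuous
  have hKD : ∀ x ∈ Submodule.span ℂ (Set.range gen), K x = fR x := fun x hx => hKval ⟨x, hx⟩
  have hSmD : ∀ l : ι →₀ ℂ, SmF gen l ∈ Submodule.span ℂ (Set.range gen) := by
    intro l
    unfold SmF Finsupp.sum
    exact Submodule.sum_mem _ fun p _ =>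
      Submodule.smul_mem _ _ (Submodule.subset_span ⟨p, rfl⟩)
  have hKSm : ∀ l : ι →₀ ℂ, K (SmF gen l) = TmF gen σ l := fun l => by
    rw [hKD _ (hSmD l), hfR]
  have hsingle : ∀ p, SmF gen (Finsupp.single p (1 : ℂ)) = gen p := by
    intro p; unfold SmF; rw [Finsupp.sum_single_index (by simp)]; simp
  have hsingleT : ∀ p, TmF gen σ (Finsupp.single p (1 : ℂ)) = gen (σ p) := by
    intro p; unfold TmF; rw [Finsupp.sum_single_index (by simp)]; simp
  have hKgen : ∀ p, K (gen p) = gen (σ p) := by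
    intro p
    rw [← hsingle p, hKSm, hsingleT]
  have hKadd : ∀ x y, K (x + y) = K x + K y := by
    have hdd : Dense (((Submodule.span ℂ (Set.range gen) : Submodule ℂ E) : Set E) ×ˢ
        ((Submodule.span ℂ (Set.range gen) : Submodule ℂ E) : Set E)) := hd.prod hd
    have hc1 : Continuous fun p : E × E => K (p.1 + p.2) :=
      hKc.comp (continuous_fst.add continuous_snd)
    have hc2 : Continuous fun p : E × E => K p.1 + K p.2 :=
      (hKc.comp continuous_fst).add (hKc.comp continuous_snd)
    have heq := hc1.ext_on hdd hc2 ?_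
    · intro x y; exact congrFun heq (x, y)
    · rintro ⟨x, y⟩ ⟨hx, hy⟩
      obtain ⟨l, hl⟩ := hmem x hx
      obtain ⟨l', hl'⟩ := hmem y hy
      show K (x + y) = K x + K y
      rw [← hl, ← hl', ← SmF_add, hKSm, hKSm, hKSm, TmF_add]
  have hKsmul : ∀ (c : ℂ) (x : E), K (c • x) = (starRingEnd ℂ) c • K x := by
    intro c
    have hc1 : Continuous fun x : E => K (c • x) := hKc.comp (continuous_const_smul c)
    have hc2 : Continuous fun x : E => (starRingEnd ℂ) c • K x := hKc.const_smul _
    have heq := hc1.ext_on hd hc2 ?_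
    · intro x; exact congrFun heq x
    · intro x hx
      obtain ⟨l, hl⟩ := hmem x hx
      show K (c • x) = (starRingEnd ℂ) c • K x
      rw [← hl, ← SmF_smul, hKSm, hKSm, TmF_smul]
  have hTmSm : ∀ l : ι →₀ ℂ, TmF gen σ l =
      SmF gen (Finsupp.mapDomain σ (Finsupp.mapRange (starRingEnd ℂ) (map_zero _) l)) := by
    intro l
    unfold SmF TmF
    rw [Finsupp.sum_mapDomain_index_inj hσinj, Finsupp.sum_mapRange_index (by simp)]
  have hKK : ∀ x, K (K x) = x := by
    have hc1 : Continuous fun x : E => K (K x) := hKc.comp hKc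
    have heq := hc1.ext_on hd continuous_id ?_
    · intro x; exact congrFun heq x
    · intro x hx
      obtain ⟨l, hl⟩ := hmem x hx
      show K (K x) = x
      rw [← hl, hKSm, hTmSm, hKSm]
      unfold SmF TmF
      rw [Finsupp.sum_mapDomain_index_inj hσinj, Finsupp.sum_mapRange_index (by simp)]
      simp only [Complex.conj_conj, hσ]
  exact ⟨K, hKc, hKgen, hKadd, hKsmul, hKK⟩

end conjext
theorem stmt_5
    {H H2 H3 : Type*}
    [NormedAddCommGroup H] [InnerProductSpace ℂ H] [CompleteSpace H]
    [NormedAddCommGroup H2] [InnerProductSpace ℂ H2] [CompleteSpace H2]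
    [NormedAddCommGroup H3] [InnerProductSpace ℂ H3] [CompleteSpace H3]
    -- the tensor map H × H → H ⊗ H = H2
    (τ : H →L[ℂ] H →L[ℂ] H2)
    (hτinner : ∀ a b c d : H, (inner ℂ (τ a b) (τ c d) : ℂ) = (inner ℂ a c : ℂ) * (inner ℂ b d : ℂ))
    (hτdense : Dense (Submodule.span ℂ (Set.range fun p : H × H => τ p.1 p.2) : Set H2))
    -- the tensor maps (H ⊗ H) × H → H ⊗ H ⊗ H = H3 and H × (H ⊗ H) → H ⊗ H ⊗ H
    (m : H2 →L[ℂ] H →L[ℂ] H3)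
    (m' : H →L[ℂ] H2 →L[ℂ] H3)
    (hmm' : ∀ a b c : H, m (τ a b) c = m' a (τ b c))
    (hminner : ∀ (u v : H2) (c d : H), (inner ℂ (m u c) (m v d) : ℂ) = (inner ℂ u v : ℂ) * (inner ℂ c d : ℂ))
    (hmdense : Dense (Submodule.span ℂ (Set.range fun p : (H × H) × H => m (τ p.1.1 p.1.2) p.2) : Set H3))
    -- the leg maps T ↦ T₁₂ = T ⊗ 1, T ↦ T₂₃ = 1 ⊗ T, T ↦ T₁₃ = (Σ⊗1)(1⊗T)(Σ⊗1)
    (leg12 leg23 leg13 : (H2 →L[ℂ] H2) → (H3 →L[ℂ] H3))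
    (hleg12 : ∀ (T : H2 →L[ℂ] H2) (u : H2) (c : H), leg12 T (m u c) = m (T u) c)
    (hleg23 : ∀ (T : H2 →L[ℂ] H2) (a : H) (v : H2), leg23 T (m' a v) = m' a (T v))
    -- the flip unitary Σ on H ⊗ H
    (Sg : H2 →L[ℂ] H2)
    (hSg : ∀ a b : H, Sg (τ a b) = τ b a)
    (hleg13 : ∀ T : H2 →L[ℂ] H2, leg13 T = leg12 Sg * leg23 T * leg12 Sg)
    -- the multiplicative unitary W, satisfying the pentagonal equation
    (W : H2 →L[ℂ] H2)
    (hWl : W * star W = 1) (hWr : star W * W = 1)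
    (hPent : leg12 W * leg13 W * leg23 W = leg23 W * leg12 W)
    -- J : a conjugate-linear isometric involution of H
    (J : H → H)
    (hJadd : ∀ x y : H, J (x + y) = J x + J y)
    (hJsmul : ∀ (c : ℂ) (x : H), J (c • x) = (starRingEnd ℂ) c • J x)
    (hJnorm : ∀ x : H, ‖J x‖ = ‖x‖)
    (hJinv : ∀ x : H, J (J x) = x)
    -- JJ : the conjugate-linear involution J⊗J of H ⊗ H
    (JJ : H2 → H2)
    (hJJadd : ∀ x y : H2, JJ (x + y) = JJ x + JJ y)
    (hJJsmul : ∀ (c : ℂ) (x : H2), JJ (c • x) = (starRingEnd ℂ) c • JJ x)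
    (hJJnorm : ∀ x : H2, ‖JJ x‖ = ‖x‖)
    (hJJinv : ∀ x : H2, JJ (JJ x) = x)
    (hJJtmul : ∀ a b : H, JJ (τ a b) = τ (J a) (J b))
    -- W' = (J⊗J) W (J⊗J), the commutant multiplicative unitary
    (W' : H2 →L[ℂ] H2)
    (hW' : ∀ x : H2, W' x = JJ (W (JJ x)))
    :
    leg13 W' * leg23 W = star (leg12 W') * leg23 W' * leg12 W' * star (leg23 W') * leg23 W := by
  classical
  -- basic facts about J and JJ
  have hJJneg : ∀ x : H2, JJ (-x) = -JJ x := by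
    intro x; rw [← neg_one_smul ℂ x, hJJsmul]; simp
  have hJJsub : ∀ x y : H2, JJ (x - y) = JJ x - JJ y := by
    intro x y; rw [sub_eq_add_neg, hJJadd, hJJneg, ← sub_eq_add_neg]
  have hJJcont : Continuous JJ := by
    refine (Isometry.of_dist_eq fun x y => ?_).continuous
    rw [dist_eq_norm, dist_eq_norm, ← hJJsub, hJJnorm]
  have hJJ0 : JJ 0 = 0 := by simpa using hJJsmul 0 0
  have hJinner := antiunitary_inner hJadd hJsmul hJnorm
  -- the conjugation K = J ⊗ J ⊗ J on H3
  obtain ⟨K, hKc, hKgen, hKadd, hKsmul, hKK⟩ :=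
    exists_conj_extension (fun p : (H × H) × H => m (τ p.1.1 p.1.2) p.2)
      (fun p : (H × H) × H => ((J p.1.1, J p.1.2), J p.2))
      (fun p => by simp [hJinv])
      (fun p q => by
        simp only [hminner, hτinner, hJinner])
      hmdense
  have hKg : ∀ a b c, K (m (τ a b) c) = m (τ (J a) (J b)) (J c) := fun a b c => hKgen ((a, b), c)
  have hK0 : K 0 = 0 := by simpa using hKsmul 0 0
  -- K on elementary vectors
  have hKm : ∀ (c : H) (u : H2), K (m u c) = m (JJ u) (J c) := by
    intro c
    have hflip : ∀ d : H, Continuous fun u : H2 => m u d := by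
      intro d
      have h := (m.flip d).continuous
      have he : (fun u : H2 => m u d) = fun u : H2 => m.flip d u := by
        funext u; rw [ContinuousLinearMap.flip_apply]
      rw [he]; exact h
    have hfc : Continuous fun u : H2 => K (m u c) := hKc.comp (hflip c)
    have hgc : Continuous fun u : H2 => m (JJ u) (J c) := (hflip (J c)).comp hJJcont
    have heq := ext_dense_span (Set.range fun p : H × H => τ p.1 p.2) hτdense (starRingEnd ℂ)
      hfc hgc (by simp [hK0]) (by simp [hJJ0])
      (fun u u' => by simp only [map_add, ContinuousLinearMap.add_apply, hKadd])
      (fun u u' => by simp only [hJJadd, map_add, ContinuousLinearMap.add_apply])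
      (fun α u => by simp only [map_smul, ContinuousLinearMap.smul_apply, hKsmul])
      (fun α u => by simp only [hJJsmul, map_smul, ContinuousLinearMap.smul_apply])
      (by rintro u ⟨⟨a, b⟩, rfl⟩; simp only; rw [hKg, hJJtmul])
    intro u; exact congrFun heq u
  have hKm' : ∀ (a : H) (v : H2), K (m' a v) = m' (J a) (JJ v) := by
    intro a
    have hfc : Continuous fun v : H2 => K (m' a v) := hKc.comp (m' a).continuous
    have hgc : Continuous fun v : H2 => m' (J a) (JJ v) := (m' (J a)).continuous.comp hJJcont
    have heq := ext_dense_span (Set.range fun p : H × H => τ p.1 p.2) hτdense (starRingEnd ℂ)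
      hfc hgc (by simp [hK0]) (by simp [hJJ0])
      (fun v v' => by simp only [map_add, hKadd])
      (fun v v' => by simp only [hJJadd, map_add])
      (fun α v => by simp only [map_smul, hKsmul])
      (fun α v => by simp only [hJJsmul, map_smul])
      (by rintro v ⟨⟨b, c⟩, rfl⟩; simp only; rw [← hmm', hKg, hmm', hJJtmul])
    intro v; exact congrFun heq v
  -- K commutes with leg12 Sg
  have hKSg : ∀ x : H3, K (leg12 Sg x) = leg12 Sg (K x) := by
    have hfc : Continuous fun x : H3 => K (leg12 Sg x) := hKc.comp (leg12 Sg).continuous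
    have hgc : Continuous fun x : H3 => leg12 Sg (K x) := (leg12 Sg).continuous.comp hKc
    have heq := ext_dense_span (Set.range fun p : (H × H) × H => m (τ p.1.1 p.1.2) p.2) hmdense
      (starRingEnd ℂ) hfc hgc (by simp [hK0]) (by simp [hK0])
      (fun x y => by simp only [map_add, hKadd])
      (fun x y => by simp only [hKadd, map_add])
      (fun α x => by simp only [map_smul, hKsmul])
      (fun α x => by simp only [hKsmul, map_smul])
      (by
        rintro x ⟨⟨⟨a, b⟩, c⟩, rfl⟩
        simp only
        rw [hleg12, hSg, hKg, hKg, hleg12, hSg])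
    intro x; exact congrFun heq x
  -- the legs of W' are K-conjugates of the legs of W
  have hL12 : ∀ x : H3, leg12 W' x = K (leg12 W (K x)) := by
    have hfc : Continuous fun x : H3 => leg12 W' x := (leg12 W').continuous
    have hgc : Continuous fun x : H3 => K (leg12 W (K x)) :=
      hKc.comp ((leg12 W).continuous.comp hKc)
    have heq := ext_dense_span (Set.range fun p : (H × H) × H => m (τ p.1.1 p.1.2) p.2) hmdense
      (fun c => c) hfc hgc (by simp) (by simp [hK0])
      (fun x y => by simp only [map_add])
      (fun x y => by simp only [hKadd, map_add])
      (fun α x => by simp only [map_smul])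
      (fun α x => by simp only [hKsmul, map_smul, Complex.conj_conj])
      (by
        rintro x ⟨⟨⟨a, b⟩, c⟩, rfl⟩
        simp only
        rw [hleg12, hW', hJJtmul, hKg, hleg12, hKm, hJinv])
    intro x; exact congrFun heq x
  have hL23 : ∀ x : H3, leg23 W' x = K (leg23 W (K x)) := by
    have hfc : Continuous fun x : H3 => leg23 W' x := (leg23 W').continuous
    have hgc : Continuous fun x : H3 => K (leg23 W (K x)) :=
      hKc.comp ((leg23 W).continuous.comp hKc)
    have heq := ext_dense_span (Set.range fun p : (H × H) × H => m (τ p.1.1 p.1.2) p.2) hmdense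
      (fun c => c) hfc hgc (by simp) (by simp [hK0])
      (fun x y => by simp only [map_add])
      (fun x y => by simp only [hKadd, map_add])
      (fun α x => by simp only [map_smul])
      (fun α x => by simp only [hKsmul, map_smul, Complex.conj_conj])
      (by
        rintro x ⟨⟨⟨a, b⟩, c⟩, rfl⟩
        simp only
        rw [hKg, hmm' a b c, hmm' (J a) (J b) (J c), hleg23, hleg23, hKm', hJinv, hW', hJJtmul])
    intro x; exact congrFun heq x
  have hL13 : ∀ x : H3, leg13 W' x = K (leg13 W (K x)) := by
    intro x
    rw [hleg13 W', hleg13 W]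
    simp only [ContinuousLinearMap.mul_apply]
    rw [hL23 (leg12 Sg x), hKSg x, hKSg (leg23 W (leg12 Sg (K x)))]
  -- the pentagon equation for W'
  have P' : leg12 W' * leg13 W' * leg23 W' = leg23 W' * leg12 W' := by
    ext x
    simp only [ContinuousLinearMap.mul_apply]
    rw [hL23 x, hL13 (K (leg23 W (K x))), hKK (leg23 W (K x)),
      hL12 (K (leg13 W (leg23 W (K x)))), hKK (leg13 W (leg23 W (K x))),
      hL12 x, hL23 (K (leg12 W (K x))), hKK (leg12 W (K x))]
    have hp := ContinuousLinearMap.ext_iff.mp hPent (K x)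
    simp only [ContinuousLinearMap.mul_apply] at hp
    rw [hp]
  -- unitarity of W and W'
  have hWpt : ∀ z : H2, W ((star W) z) = z := by
    intro z
    have h := ContinuousLinearMap.ext_iff.mp hWl z
    simpa [ContinuousLinearMap.mul_apply] using h
  have hWrpt : ∀ z : H2, (star W) (W z) = z := by
    intro z
    have h := ContinuousLinearMap.ext_iff.mp hWr z
    simpa [ContinuousLinearMap.mul_apply] using h
  have hWinner : ∀ z z' : H2, (inner ℂ (W z) (W z') : ℂ) = inner ℂ z z' := by
    intro z z'
    calc (inner ℂ (W z) (W z') : ℂ)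
        = inner ℂ z ((ContinuousLinearMap.adjoint W) (W z')) :=
          (ContinuousLinearMap.adjoint_inner_right W z (W z')).symm
      _ = inner ℂ z z' := by
          rw [← ContinuousLinearMap.star_eq_adjoint, hWrpt]
  have hWnorm : ∀ z : H2, ‖W z‖ = ‖z‖ := fun z => norm_eq_of_inner_self_eq (hWinner z z)
  have hW'norm : ∀ z : H2, ‖W' z‖ = ‖z‖ := by
    intro z; rw [hW', hJJnorm, hWnorm, hJJnorm]
  have hW'inner : ∀ z z' : H2, (inner ℂ (W' z) (W' z') : ℂ) = inner ℂ z z' :=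
    fun z z' => LinearIsometry.inner_map_map ⟨(W' : H2 →ₗ[ℂ] H2), hW'norm⟩ z z'
  have hW'u1 : star W' * W' = 1 := by
    ext z
    simp only [ContinuousLinearMap.mul_apply, ContinuousLinearMap.one_apply]
    apply ext_inner_left ℂ
    intro v
    rw [ContinuousLinearMap.star_eq_adjoint, ContinuousLinearMap.adjoint_inner_right, hW'inner]
  have hW'pt1 : ∀ z : H2, (star W') (W' z) = z := by
    intro z
    have h := ContinuousLinearMap.ext_iff.mp hW'u1 z
    simpa [ContinuousLinearMap.mul_apply] using h
  have hW'u2 : W' * star W' = 1 := by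
    ext y
    obtain ⟨z, rfl⟩ : ∃ z, W' z = y := by
      refine ⟨JJ ((star W) (JJ y)), ?_⟩
      rw [hW', hJJinv, hWpt, hJJinv]
    simp only [ContinuousLinearMap.mul_apply, ContinuousLinearMap.one_apply]
    rw [hW'pt1]
  -- hom properties of the legs
  have ext3 : ∀ {A B : H3 →L[ℂ] H3}, (∀ a b c, A (m (τ a b) c) = B (m (τ a b) c)) → A = B := by
    intro A B h
    apply clm_ext_dense _ hmdense
    rintro x ⟨⟨⟨a, b⟩, c⟩, rfl⟩
    exact h a b c
  have ext3c : ∀ {A B : H3 →L[ℂ] ℂ}, (∀ a b c, A (m (τ a b) c) = B (m (τ a b) c)) → A = B := by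
    intro A B h
    apply clm_ext_dense _ hmdense
    rintro x ⟨⟨⟨a, b⟩, c⟩, rfl⟩
    exact h a b c
  have ext2 : ∀ {A B : H2 →L[ℂ] ℂ}, (∀ b c : H, A (τ b c) = B (τ b c)) → A = B := by
    intro A B h
    apply clm_ext_dense _ hτdense
    rintro x ⟨⟨b, c⟩, rfl⟩
    exact h b c
  have l12mul : ∀ S T : H2 →L[ℂ] H2, leg12 (S * T) = leg12 S * leg12 T := by
    intro S T; apply ext3; intro a b c
    rw [hleg12, ContinuousLinearMap.mul_apply, ContinuousLinearMap.mul_apply, hleg12, hleg12]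
  have l12one : leg12 1 = 1 := by
    apply ext3; intro a b c
    rw [hleg12, ContinuousLinearMap.one_apply, ContinuousLinearMap.one_apply]
  have l23mul : ∀ S T : H2 →L[ℂ] H2, leg23 (S * T) = leg23 S * leg23 T := by
    intro S T; apply ext3; intro a b c
    rw [hmm', hleg23, ContinuousLinearMap.mul_apply, ContinuousLinearMap.mul_apply, hleg23, hleg23]
  have l23one : leg23 1 = 1 := by
    apply ext3; intro a b c
    rw [hmm', hleg23, ContinuousLinearMap.one_apply, ContinuousLinearMap.one_apply]
  -- inner ℂ product formula for m'
  have hm'A : ∀ (a b b' c' : H) (w : H2),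
      (inner ℂ (m' a (τ b' c')) (m' b w) : ℂ) = (inner ℂ a b : ℂ) * (inner ℂ (τ b' c') w : ℂ) := by
    intro a b b' c'
    have h : (innerSL ℂ (m' a (τ b' c'))).comp (m' b) = (inner ℂ a b : ℂ) • innerSL ℂ (τ b' c') := by
      apply ext2
      intro b'' c''
      simp only [ContinuousLinearMap.comp_apply, innerSL_apply_apply, ContinuousLinearMap.smul_apply,
        smul_eq_mul]
      rw [← hmm', ← hmm', hminner, hτinner, hτinner]
      ring
    intro w
    have h2 := ContinuousLinearMap.ext_iff.mp h w
    simpa only [ContinuousLinearMap.comp_apply, innerSL_apply_apply, ContinuousLinearMap.smul_apply,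
      smul_eq_mul] using h2
  have hm'inner : ∀ (a b : H) (v w : H2),
      (inner ℂ (m' a v) (m' b w) : ℂ) = (inner ℂ a b : ℂ) * (inner ℂ v w : ℂ) := by
    intro a b v w
    have h : (innerSL ℂ (m' b w)).comp (m' a) = (inner ℂ b a : ℂ) • innerSL ℂ w := by
      apply ext2
      intro b' c'
      simp only [ContinuousLinearMap.comp_apply, innerSL_apply_apply, ContinuousLinearMap.smul_apply,
        smul_eq_mul]
      rw [← inner_conj_symm, hm'A, map_mul, inner_conj_symm, inner_conj_symm]
    have h2 := ContinuousLinearMap.ext_iff.mp h v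
    simp only [ContinuousLinearMap.comp_apply, innerSL_apply_apply, ContinuousLinearMap.smul_apply,
      smul_eq_mul] at h2
    calc (inner ℂ (m' a v) (m' b w) : ℂ)
        = (starRingEnd ℂ) (inner ℂ (m' b w) (m' a v) : ℂ) := (inner_conj_symm _ _).symm
      _ = (starRingEnd ℂ) ((inner ℂ b a : ℂ) * (inner ℂ w v : ℂ)) := by rw [h2]
      _ = (inner ℂ a b : ℂ) * (inner ℂ v w : ℂ) := by rw [map_mul, inner_conj_symm, inner_conj_symm]
  -- the legs intertwine adjoints
  have l12star : ∀ T : H2 →L[ℂ] H2, leg12 (star T) = star (leg12 T) := by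
    intro T
    have hA : ∀ (v : H2) (d : H) (x : H3),
        (inner ℂ (m v d) (leg12 (star T) x) : ℂ) = (inner ℂ (leg12 T (m v d)) x : ℂ) := by
      intro v d
      have h : (innerSL ℂ (m v d)).comp (leg12 (star T)) = innerSL ℂ (leg12 T (m v d)) := by
        apply ext3c
        intro a b c
        simp only [ContinuousLinearMap.comp_apply, innerSL_apply_apply]
        rw [hleg12, hleg12, hminner, hminner, ContinuousLinearMap.star_eq_adjoint,
          ContinuousLinearMap.adjoint_inner_right]
      intro x
      have h2 := ContinuousLinearMap.ext_iff.mp h x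
      simpa only [ContinuousLinearMap.comp_apply, innerSL_apply_apply] using h2
    rw [ContinuousLinearMap.star_eq_adjoint (leg12 T), ContinuousLinearMap.eq_adjoint_iff]
    intro x y
    have h : innerSL ℂ (leg12 (star T) x) = (innerSL ℂ x).comp (leg12 T) := by
      apply ext3c
      intro a b c
      simp only [innerSL_apply_apply, ContinuousLinearMap.comp_apply]
      rw [← inner_conj_symm, hA, inner_conj_symm]
    have h2 := ContinuousLinearMap.ext_iff.mp h y
    simpa only [innerSL_apply_apply, ContinuousLinearMap.comp_apply] using h2
  have l23star : ∀ T : H2 →L[ℂ] H2, leg23 (star T) = star (leg23 T) := by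
    intro T
    have hA : ∀ (b : H) (w : H2) (x : H3),
        (inner ℂ (m' b w) (leg23 (star T) x) : ℂ) = (inner ℂ (leg23 T (m' b w)) x : ℂ) := by
      intro b w
      have h : (innerSL ℂ (m' b w)).comp (leg23 (star T)) = innerSL ℂ (leg23 T (m' b w)) := by
        apply ext3c
        intro a b' c
        simp only [ContinuousLinearMap.comp_apply, innerSL_apply_apply]
        rw [hmm', hleg23, hleg23, hm'inner, hm'inner, ContinuousLinearMap.star_eq_adjoint,
          ContinuousLinearMap.adjoint_inner_right]
      intro x
      have h2 := ContinuousLinearMap.ext_iff.mp h x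
      simpa only [ContinuousLinearMap.comp_apply, innerSL_apply_apply] using h2
    rw [ContinuousLinearMap.star_eq_adjoint (leg23 T), ContinuousLinearMap.eq_adjoint_iff]
    intro x y
    have h : innerSL ℂ (leg23 (star T) x) = (innerSL ℂ x).comp (leg23 T) := by
      apply ext3c
      intro a b c
      simp only [innerSL_apply_apply, ContinuousLinearMap.comp_apply]
      rw [hmm', ← inner_conj_symm, hA, inner_conj_symm]
    have h2 := ContinuousLinearMap.ext_iff.mp h y
    simpa only [innerSL_apply_apply, ContinuousLinearMap.comp_apply] using h2
  -- assemble
  have hu1 : star (leg12 W') * leg12 W' = 1 := by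
    rw [← l12star, ← l12mul, hW'u1, l12one]
  have hu2 : leg23 W' * star (leg23 W') = 1 := by
    rw [← l23star, ← l23mul, hW'u2, l23one]
  have key : star (leg12 W') * (leg23 W' * leg12 W') * star (leg23 W') = leg13 W' := by
    rw [← P']
    calc star (leg12 W') * (leg12 W' * leg13 W' * leg23 W') * star (leg23 W')
        = (star (leg12 W') * leg12 W') * (leg13 W' * (leg23 W' * star (leg23 W'))) := by
          simp only [mul_assoc]
      _ = leg13 W' := by rw [hu1, hu2, one_mul, mul_one]
  rw [mul_assoc (star (leg12 W')) (leg23 W') (leg12 W'), key]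
end
end

section
/- Suppose that W''₂₃ commutes with W'₁₃ (as holds in the quantum group setting, where the relevant legs lie in a von Neumann algebra and its commutant respectively). Then W''₁₃ W'₁₃ W''₂₃ W₂₃ = W'₁₂* W''₂₃ W'₂₃ W'₁₂ W'₂₃* W₂₃ as bounded operators on H⊗H⊗H. -/
noncomputable section

open scoped ComplexConjugate

lemma dense_zero_aux {E F : Type*} [NormedAddCommGroup E] [NormedSpace ℂ E]
    [NormedAddCommGroup F] [NormedSpace ℂ F]
    (σ : ℂ →+* ℂ) {s : Set E} (hs : Dense (Submodule.span ℂ s : Set E))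
    {φ : E → F} (hadd : ∀ x y, φ (x + y) = φ x + φ y)
    (hsmul : ∀ (c : ℂ) (x : E), φ (c • x) = σ c • φ x)
    (hcont : Continuous φ) (h0 : ∀ x ∈ s, φ x = 0) : ∀ x, φ x = 0 := by
  have hz : φ 0 = 0 := by
    have h := hsmul 0 0
    simpa using h
  have hspan : ∀ x ∈ Submodule.span ℂ s, φ x = 0 := by
    intro x hx
    induction hx using Submodule.span_induction with
    | mem x hxs => exact h0 x hxs
    | zero => exact hz
    | add x y _ _ hx hy => rw [hadd, hx, hy, add_zero]
    | smul c x _ hx => rw [hsmul, hx, smul_zero]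
  have hclosed : IsClosed {x : E | φ x = 0} := isClosed_eq hcont continuous_const
  intro x
  have hsub : (Submodule.span ℂ s : Set E) ⊆ {x : E | φ x = 0} := hspan
  have h2 := closure_minimal hsub hclosed
  rw [hs.closure_eq] at h2
  exact h2 (Set.mem_univ x)

lemma antilinear_inner_flip {E : Type*} [NormedAddCommGroup E] [InnerProductSpace ℂ E]
    (f : E → E) (hadd : ∀ x y, f (x + y) = f x + f y)
    (hsmul : ∀ (c : ℂ) (x : E), f (c • x) = (starRingEnd ℂ) c • f x)
    (hnorm : ∀ x : E, ‖f x‖ = ‖x‖) :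
    ∀ x y : E, (inner ℂ (f x) (f y) : ℂ) = inner ℂ y x := by
  have hneg : ∀ x : E, f (-x) = -f x := by
    intro x
    have h := hsmul (-1) x
    simpa using h
  have hsub : ∀ x y : E, f (x - y) = f x - f y := by
    intro x y
    rw [sub_eq_add_neg, hadd, hneg, ← sub_eq_add_neg]
  have hI : ∀ y : E, Complex.I • f y = f ((-Complex.I) • y) := by
    intro y
    rw [hsmul]
    simp
  intro x y
  have e1 : ‖f x + f y‖ = ‖y + x‖ := by rw [← hadd, hnorm, add_comm]
  have e2 : ‖f x - f y‖ = ‖y - x‖ := by rw [← hsub, hnorm, norm_sub_rev]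
  have e3 : ‖f x - Complex.I • f y‖ = ‖y - Complex.I • x‖ := by
    rw [hI, ← hsub]
    rw [show x - (-Complex.I) • y = x + Complex.I • y by rw [neg_smul, sub_neg_eq_add]]
    rw [hnorm]
    rw [show x + Complex.I • y = Complex.I • (y - Complex.I • x) by
      rw [smul_sub, smul_smul, Complex.I_mul_I, neg_one_smul, sub_neg_eq_add, add_comm]]
    rw [norm_smul, Complex.norm_I, one_mul]
  have e4 : ‖f x + Complex.I • f y‖ = ‖y + Complex.I • x‖ := by
    rw [hI, ← hadd]
    rw [show x + (-Complex.I) • y = x - Complex.I • y by rw [neg_smul, ← sub_eq_add_neg]]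
    rw [hnorm]
    rw [show x - Complex.I • y = -(Complex.I • (y + Complex.I • x)) by
      rw [smul_add, smul_smul, Complex.I_mul_I, neg_one_smul, neg_add, neg_neg, add_comm,
        ← sub_eq_add_neg]]
    rw [norm_neg, norm_smul, Complex.norm_I, one_mul]
  rw [inner_eq_sum_norm_sq_div_four, inner_eq_sum_norm_sq_div_four, RCLike.I_to_complex,
    e1, e2, e3, e4]



lemma addisom_continuous {E F : Type*} [NormedAddCommGroup E] [NormedAddCommGroup F]
    (f : E → F) (hadd : ∀ x y, f (x + y) = f x + f y) (hnorm : ∀ x, ‖f x‖ = ‖x‖) :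
    Continuous f := by
  have hsub : ∀ x y, f (x - y) = f x - f y := by
    intro x y
    have h := hadd (x - y) y
    rw [sub_add_cancel] at h
    exact eq_sub_iff_add_eq.mpr h.symm
  have hlip : LipschitzWith 1 f := LipschitzWith.of_dist_le_mul fun x y => by
    rw [dist_eq_norm, dist_eq_norm, ← hsub, hnorm, NNReal.coe_one, one_mul]
  exact hlip.continuous

lemma exists_antilinear_ext {G : Type*} [NormedAddCommGroup G] [InnerProductSpace ℂ G]
    [CompleteSpace G] {ι : Type*} (g t : ι → G)
    (hdense : Dense (Submodule.span ℂ (Set.range g) : Set G))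
    (hinner : ∀ i j, (inner ℂ (t i) (t j) : ℂ) = inner ℂ (g j) (g i)) :
    ∃ K : G → G, Continuous K ∧ (∀ x y, K (x + y) = K x + K y) ∧
      (∀ (c : ℂ) (x : G), K (c • x) = (starRingEnd ℂ) c • K x) ∧ (∀ i, K (g i) = t i) := by
  classical
  set L : (ι →₀ ℂ) →ₗ[ℂ] G := Finsupp.linearCombination ℂ g with hLdef
  set T : (ι →₀ ℂ) → G := fun f => f.sum fun i c => (starRingEnd ℂ) c • t i with hTdef
  have hT0 : ∀ i : ι, (starRingEnd ℂ) (0 : ℂ) • t i = 0 := by intro i; simp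
  have hTadd : ∀ f f' : ι →₀ ℂ, T (f + f') = T f + T f' := by
    intro f f'
    exact Finsupp.sum_add_index' hT0 (by intro i b₁ b₂; rw [map_add, add_smul])
  have hTzero : T 0 = 0 := by simp [hTdef]
  have hTsub : ∀ f f' : ι →₀ ℂ, T (f - f') = T f - T f' := by
    intro f f'
    have h := hTadd (f - f') f'
    rw [sub_add_cancel] at h
    rw [h]; abel
  have hTsmul : ∀ (c : ℂ) (f : ι →₀ ℂ), T (c • f) = (starRingEnd ℂ) c • T f := by
    intro c f
    rw [hTdef]
    simp only
    rw [Finsupp.sum_smul_index' (fun i => hT0 i)]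
    rw [Finsupp.smul_sum]
    refine Finsupp.sum_congr fun i _ => ?_
    rw [smul_eq_mul, map_mul, mul_smul]
  have hTinner : ∀ f f' : ι →₀ ℂ, (inner ℂ (T f) (T f') : ℂ) = inner ℂ (L f') (L f) := by
    intro f f'
    have hT' : ∀ h : ι →₀ ℂ, T h = ∑ i ∈ h.support, (starRingEnd ℂ) (h i) • t i := fun h => rfl
    have hL' : ∀ h : ι →₀ ℂ, L h = ∑ i ∈ h.support, (h i) • g i := by
      intro h
      rw [hLdef, Finsupp.linearCombination_apply, Finsupp.sum]
    rw [hT', hT', hL', hL']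
    simp_rw [sum_inner, inner_sum]
    rw [Finset.sum_comm]
    refine Finset.sum_congr rfl fun j hj => Finset.sum_congr rfl fun i hi => ?_
    rw [inner_smul_left, inner_smul_right, inner_smul_left, inner_smul_right, hinner]
    rw [Complex.conj_conj]
    ring
  have hTnorm : ∀ f : ι →₀ ℂ, ‖T f‖ = ‖L f‖ := by
    intro f
    rw [@norm_eq_sqrt_re_inner ℂ, @norm_eq_sqrt_re_inner ℂ, hTinner f f]
  set p : Submodule ℂ G := Submodule.span ℂ (Set.range g) with hpdef
  have hrange : ∀ z : p, ∃ f : ι →₀ ℂ, L f = (z : G) := by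
    intro z
    have hz : (z : G) ∈ LinearMap.range L := by
      rw [hLdef, Finsupp.range_linearCombination]
      exact z.2
    exact hz
  choose F hF using hrange
  set k0 : p → G := fun z => T (F z) with hk0def
  have key : ∀ (z : p) (f : ι →₀ ℂ), L f = (z : G) → k0 z = T f := by
    intro z f hf
    have h1 : L (F z - f) = 0 := by rw [map_sub, hF, hf, sub_self]
    have h2 : ‖T (F z - f)‖ = 0 := by rw [hTnorm, h1, norm_zero]
    have h3 : T (F z - f) = 0 := norm_eq_zero.mp h2
    rw [hTsub] at h3
    exact sub_eq_zero.mp h3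
  have k0add : ∀ z w : p, k0 (z + w) = k0 z + k0 w := by
    intro z w
    have h : L (F z + F w) = ((z + w : p) : G) := by
      rw [map_add, hF, hF]; rfl
    rw [key (z + w) (F z + F w) h, hTadd]
  have k0smul : ∀ (c : ℂ) (z : p), k0 (c • z) = (starRingEnd ℂ) c • k0 z := by
    intro c z
    have h : L (c • F z) = ((c • z : p) : G) := by
      rw [map_smul, hF]; rfl
    rw [key (c • z) (c • F z) h, hTsmul]
  have k0norm : ∀ z : p, ‖k0 z‖ = ‖z‖ := by
    intro z
    have : ‖k0 z‖ = ‖L (F z)‖ := hTnorm (F z)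
    rw [this, hF]
    rfl
  let K₁ : p →ₛₗ[starRingEnd ℂ] G :=
    { toFun := k0, map_add' := k0add, map_smul' := k0smul }
  let K₂ : p →SL[starRingEnd ℂ] G := LinearMap.mkContinuous K₁ 1 (fun z => by
    show ‖k0 z‖ ≤ 1 * ‖z‖
    rw [k0norm, one_mul])
  have hdr : DenseRange (p.subtypeL : p →L[ℂ] G) := by
    have : Set.range (p.subtypeL : p → G) = (p : Set G) := Subtype.range_val
    unfold DenseRange
    rw [this]
    exact hdense
  have hui : IsUniformInducing (p.subtypeL : p →L[ℂ] G) := by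
    exact isometry_subtype_coe.isUniformInducing
  let K : G →SL[starRingEnd ℂ] G := K₂.extend p.subtypeL
  refine ⟨K, K.continuous, fun x y => K.map_add x y, fun c x => K.map_smulₛₗ c x, fun i => ?_⟩
  have hmem : g i ∈ p := Submodule.subset_span (Set.mem_range_self i)
  have h1 : K (p.subtypeL ⟨g i, hmem⟩) = K₂ ⟨g i, hmem⟩ :=
    ContinuousLinearMap.extend_eq K₂ hdr hui _
  have h2 : (p.subtypeL ⟨g i, hmem⟩ : G) = g i := rfl
  rw [h2] at h1
  rw [h1]
  show k0 ⟨g i, hmem⟩ = t i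
  have hsingle : L (Finsupp.single i (1 : ℂ)) = ((⟨g i, hmem⟩ : p) : G) := by
    rw [hLdef, Finsupp.linearCombination_single, one_smul]
  rw [key _ _ hsingle]
  show (Finsupp.single i (1 : ℂ)).sum (fun j c => (starRingEnd ℂ) c • t j) = t i
  rw [Finsupp.sum_single_index (hT0 i)]
  simp

set_option maxHeartbeats 1600000 in
theorem stmt_8
    {H H2 H3 : Type*}
    [NormedAddCommGroup H] [InnerProductSpace ℂ H] [CompleteSpace H]
    [NormedAddCommGroup H2] [InnerProductSpace ℂ H2] [CompleteSpace H2]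
    [NormedAddCommGroup H3] [InnerProductSpace ℂ H3] [CompleteSpace H3]
    -- the tensor map H × H → H ⊗ H = H2
    (τ : H →L[ℂ] H →L[ℂ] H2)
    (hτinner : ∀ a b c d : H, (inner ℂ (τ a b) (τ c d) : ℂ) = (inner ℂ a c : ℂ) * (inner ℂ b d : ℂ))
    (hτdense : Dense (Submodule.span ℂ (Set.range fun p : H × H => τ p.1 p.2) : Set H2))
    -- the tensor maps (H ⊗ H) × H → H ⊗ H ⊗ H = H3 and H × (H ⊗ H) → H ⊗ H ⊗ H
    (m : H2 →L[ℂ] H →L[ℂ] H3)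
    (m' : H →L[ℂ] H2 →L[ℂ] H3)
    (hmm' : ∀ a b c : H, m (τ a b) c = m' a (τ b c))
    (hminner : ∀ (u v : H2) (c d : H), (inner ℂ (m u c) (m v d) : ℂ) = (inner ℂ u v : ℂ) * (inner ℂ c d : ℂ))
    (hmdense : Dense (Submodule.span ℂ (Set.range fun p : (H × H) × H => m (τ p.1.1 p.1.2) p.2) : Set H3))
    -- the leg maps T ↦ T₁₂ = T ⊗ 1, T ↦ T₂₃ = 1 ⊗ T, T ↦ T₁₃ = (Σ⊗1)(1⊗T)(Σ⊗1)
    (leg12 leg23 leg13 : (H2 →L[ℂ] H2) → (H3 →L[ℂ] H3))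
    (hleg12 : ∀ (T : H2 →L[ℂ] H2) (u : H2) (c : H), leg12 T (m u c) = m (T u) c)
    (hleg23 : ∀ (T : H2 →L[ℂ] H2) (a : H) (v : H2), leg23 T (m' a v) = m' a (T v))
    -- the flip unitary Σ on H ⊗ H
    (Sg : H2 →L[ℂ] H2)
    (hSg : ∀ a b : H, Sg (τ a b) = τ b a)
    (hleg13 : ∀ T : H2 →L[ℂ] H2, leg13 T = leg12 Sg * leg23 T * leg12 Sg)
    -- the multiplicative unitary W, satisfying the pentagonal equation
    (W : H2 →L[ℂ] H2)
    (hWl : W * star W = 1) (hWr : star W * W = 1)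
    (hPent : leg12 W * leg13 W * leg23 W = leg23 W * leg12 W)
    -- J : a conjugate-linear isometric involution of H
    (J : H → H)
    (hJadd : ∀ x y : H, J (x + y) = J x + J y)
    (hJsmul : ∀ (c : ℂ) (x : H), J (c • x) = (starRingEnd ℂ) c • J x)
    (hJnorm : ∀ x : H, ‖J x‖ = ‖x‖)
    (hJinv : ∀ x : H, J (J x) = x)
    -- Jh : a conjugate-linear isometric involution of H
    (Jh : H → H)
    (hJhadd : ∀ x y : H, Jh (x + y) = Jh x + Jh y)
    (hJhsmul : ∀ (c : ℂ) (x : H), Jh (c • x) = (starRingEnd ℂ) c • Jh x)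
    (hJhnorm : ∀ x : H, ‖Jh x‖ = ‖x‖)
    (hJhinv : ∀ x : H, Jh (Jh x) = x)
    -- JJ : the conjugate-linear involution J⊗J of H ⊗ H
    (JJ : H2 → H2)
    (hJJadd : ∀ x y : H2, JJ (x + y) = JJ x + JJ y)
    (hJJsmul : ∀ (c : ℂ) (x : H2), JJ (c • x) = (starRingEnd ℂ) c • JJ x)
    (hJJnorm : ∀ x : H2, ‖JJ x‖ = ‖x‖)
    (hJJinv : ∀ x : H2, JJ (JJ x) = x)
    (hJJtmul : ∀ a b : H, JJ (τ a b) = τ (J a) (J b))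
    -- JJh : the conjugate-linear involution J⊗Ĵ of H ⊗ H
    (JJh : H2 → H2)
    (hJJhadd : ∀ x y : H2, JJh (x + y) = JJh x + JJh y)
    (hJJhsmul : ∀ (c : ℂ) (x : H2), JJh (c • x) = (starRingEnd ℂ) c • JJh x)
    (hJJhnorm : ∀ x : H2, ‖JJh x‖ = ‖x‖)
    (hJJhinv : ∀ x : H2, JJh (JJh x) = x)
    (hJJhtmul : ∀ a b : H, JJh (τ a b) = τ (J a) (Jh b))
    -- JhJ : the conjugate-linear involution Ĵ⊗J of H ⊗ H
    (JhJ : H2 → H2)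
    (hJhJadd : ∀ x y : H2, JhJ (x + y) = JhJ x + JhJ y)
    (hJhJsmul : ∀ (c : ℂ) (x : H2), JhJ (c • x) = (starRingEnd ℂ) c • JhJ x)
    (hJhJnorm : ∀ x : H2, ‖JhJ x‖ = ‖x‖)
    (hJhJinv : ∀ x : H2, JhJ (JhJ x) = x)
    (hJhJtmul : ∀ a b : H, JhJ (τ a b) = τ (Jh a) (J b))
    -- the assumption W* = (Ĵ⊗J) W (Ĵ⊗J)
    (hWstar : ∀ x : H2, (star W) x = JhJ (W (JhJ x)))
    -- W' = (J⊗J) W (J⊗J), the commutant multiplicative unitary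
    (W' : H2 →L[ℂ] H2)
    (hW' : ∀ x : H2, W' x = JJ (W (JJ x)))
    -- W'' = (J⊗Ĵ) W (J⊗Ĵ) (in the quantum group setting, W'' = (W'ᵒᵖ)*)
    (W'' : H2 →L[ℂ] H2)
    (hW'' : ∀ x : H2, W'' x = JJh (W (JJh x)))
    -- W''₂₃ commutes with W'₁₃
    (hcomm : Commute (leg23 W'') (leg13 W')) :
    leg13 W'' * leg13 W' * leg23 W'' * leg23 W =
      star (leg12 W') * leg23 W'' * leg23 W' * leg12 W' * star (leg23 W') * leg23 W := by
  classical
  -- dense generating sets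
  have hdense3 : Dense (Submodule.span ℂ
      (Set.range fun p : H × H × H => m (τ p.1 p.2.1) p.2.2) : Set H3) := by
    have hre : (Set.range fun p : H × H × H => m (τ p.1 p.2.1) p.2.2)
        = Set.range fun p : (H × H) × H => m (τ p.1.1 p.1.2) p.2 := by
      ext x
      constructor
      · rintro ⟨⟨a, b, c⟩, rfl⟩; exact ⟨⟨⟨a, b⟩, c⟩, rfl⟩
      · rintro ⟨⟨⟨a, b⟩, c⟩, rfl⟩; exact ⟨⟨a, b, c⟩, rfl⟩
    rw [hre]
    exact hmdense
  -- continuity of the conjugations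
  have hJJcont : Continuous JJ := addisom_continuous JJ hJJadd hJJnorm
  have hJJhcont : Continuous JJh := addisom_continuous JJh hJJhadd hJJhnorm
  -- inner ℂ product flips
  have flipJ := antilinear_inner_flip J hJadd hJsmul hJnorm
  have flipJh := antilinear_inner_flip Jh hJhadd hJhsmul hJhnorm
  have flipJJ := antilinear_inner_flip JJ hJJadd hJJsmul hJJnorm
  -- the two antiunitary conjugations of H3 : K = J ⊗ J ⊗ Jh and K' = J ⊗ J ⊗ J
  obtain ⟨K, Kcont, Kadd, Ksmul, Kgen0⟩ := exists_antilinear_ext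
    (fun p : H × H × H => m (τ p.1 p.2.1) p.2.2)
    (fun p : H × H × H => m (τ (J p.1) (J p.2.1)) (Jh p.2.2))
    hdense3
    (by
      intro i j
      rw [hminner, hminner, hτinner, hτinner, flipJ, flipJ, flipJh])
  obtain ⟨K', K'cont, K'add, K'smul, K'gen0⟩ := exists_antilinear_ext
    (fun p : H × H × H => m (τ p.1 p.2.1) p.2.2)
    (fun p : H × H × H => m (τ (J p.1) (J p.2.1)) (J p.2.2))
    hdense3
    (by
      intro i j
      rw [hminner, hminner, hτinner, hτinner, flipJ, flipJ, flipJ])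
  have Kgen : ∀ a b c : H, K (m (τ a b) c) = m (τ (J a) (J b)) (Jh c) :=
    fun a b c => Kgen0 (a, b, c)
  have K'gen : ∀ a b c : H, K' (m (τ a b) c) = m (τ (J a) (J b)) (J c) :=
    fun a b c => K'gen0 (a, b, c)
  -- K, K' are involutions
  have KK : ∀ x : H3, K (K x) = x := by
    have h := dense_zero_aux (RingHom.id ℂ) hdense3 (φ := fun x => K (K x) - x)
      (by intro x y; beta_reduce; rw [Kadd, Kadd]; abel)
      (by intro c x
          beta_reduce
          rw [Ksmul, Ksmul, Complex.conj_conj]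
          simp only [RingHom.id_apply, smul_sub])
      ((Kcont.comp Kcont).sub continuous_id)
      (by rintro x ⟨⟨a, b, c⟩, rfl⟩
          beta_reduce
          rw [Kgen, Kgen, hJinv, hJinv, hJhinv, sub_self])
    intro x
    exact sub_eq_zero.mp (h x)
  have K'K' : ∀ x : H3, K' (K' x) = x := by
    have h := dense_zero_aux (RingHom.id ℂ) hdense3 (φ := fun x => K' (K' x) - x)
      (by intro x y; beta_reduce; rw [K'add, K'add]; abel)
      (by intro c x
          beta_reduce
          rw [K'smul, K'smul, Complex.conj_conj]
          simp only [RingHom.id_apply, smul_sub])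
      ((K'cont.comp K'cont).sub continuous_id)
      (by rintro x ⟨⟨a, b, c⟩, rfl⟩
          beta_reduce
          rw [K'gen, K'gen, hJinv, hJinv, hJinv, sub_self])
    intro x
    exact sub_eq_zero.mp (h x)
  -- action of K, K' on simple vectors with general H2-component
  have Kmuc : ∀ (c : H) (u : H2), K (m u c) = m (JJ u) (Jh c) := by
    intro c
    have h := dense_zero_aux (starRingEnd ℂ) hτdense
      (φ := fun u => K (m u c) - m (JJ u) (Jh c))
      (by intro u v
          beta_reduce
          have h1 : m (u + v) c = m u c + m v c := by rw [map_add]; rfl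
          have h2 : m (JJ u + JJ v) (Jh c) = m (JJ u) (Jh c) + m (JJ v) (Jh c) := by
            rw [map_add]; rfl
          rw [h1, Kadd, hJJadd, h2]; abel)
      (by intro d u
          beta_reduce
          have h1 : m (d • u) c = d • m u c := by rw [map_smul]; rfl
          have h2 : m ((starRingEnd ℂ) d • JJ u) (Jh c) = (starRingEnd ℂ) d • m (JJ u) (Jh c) := by
            rw [map_smul]; rfl
          rw [h1, Ksmul, hJJsmul, h2, smul_sub])
      ((Kcont.comp (m.flip c).continuous).sub ((m.flip (Jh c)).continuous.comp hJJcont))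
      (by rintro u ⟨⟨a, b⟩, rfl⟩
          beta_reduce
          rw [Kgen, hJJtmul, sub_self])
    intro u
    exact sub_eq_zero.mp (h u)
  have K'muc : ∀ (c : H) (u : H2), K' (m u c) = m (JJ u) (J c) := by
    intro c
    have h := dense_zero_aux (starRingEnd ℂ) hτdense
      (φ := fun u => K' (m u c) - m (JJ u) (J c))
      (by intro u v
          beta_reduce
          have h1 : m (u + v) c = m u c + m v c := by rw [map_add]; rfl
          have h2 : m (JJ u + JJ v) (J c) = m (JJ u) (J c) + m (JJ v) (J c) := by
            rw [map_add]; rfl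
          rw [h1, K'add, hJJadd, h2]; abel)
      (by intro d u
          beta_reduce
          have h1 : m (d • u) c = d • m u c := by rw [map_smul]; rfl
          have h2 : m ((starRingEnd ℂ) d • JJ u) (J c) = (starRingEnd ℂ) d • m (JJ u) (J c) := by
            rw [map_smul]; rfl
          rw [h1, K'smul, hJJsmul, h2, smul_sub])
      ((K'cont.comp (m.flip c).continuous).sub ((m.flip (J c)).continuous.comp hJJcont))
      (by rintro u ⟨⟨a, b⟩, rfl⟩
          beta_reduce
          rw [K'gen, hJJtmul, sub_self])
    intro u
    exact sub_eq_zero.mp (h u)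
  have Km'aw : ∀ (a : H) (w : H2), K (m' a w) = m' (J a) (JJh w) := by
    intro a
    have h := dense_zero_aux (starRingEnd ℂ) hτdense
      (φ := fun w => K (m' a w) - m' (J a) (JJh w))
      (by intro u v
          beta_reduce
          rw [map_add, Kadd, hJJhadd, map_add]; abel)
      (by intro d u
          beta_reduce
          rw [map_smul, Ksmul, hJJhsmul, map_smul, smul_sub])
      ((Kcont.comp (m' a).continuous).sub ((m' (J a)).continuous.comp hJJhcont))
      (by rintro w ⟨⟨b, c⟩, rfl⟩
          beta_reduce
          rw [← hmm', Kgen, hmm', ← hJJhtmul, sub_self])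
    intro w
    exact sub_eq_zero.mp (h w)
  have K'm'aw : ∀ (a : H) (w : H2), K' (m' a w) = m' (J a) (JJ w) := by
    intro a
    have h := dense_zero_aux (starRingEnd ℂ) hτdense
      (φ := fun w => K' (m' a w) - m' (J a) (JJ w))
      (by intro u v
          beta_reduce
          rw [map_add, K'add, hJJadd, map_add]; abel)
      (by intro d u
          beta_reduce
          rw [map_smul, K'smul, hJJsmul, map_smul, smul_sub])
      ((K'cont.comp (m' a).continuous).sub ((m' (J a)).continuous.comp hJJcont))
      (by rintro w ⟨⟨b, c⟩, rfl⟩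
          beta_reduce
          rw [← hmm', K'gen, hmm', ← hJJtmul, sub_self])
    intro w
    exact sub_eq_zero.mp (h w)
  -- K, K' commute with Σ₁₂
  have KS : ∀ x : H3, K (leg12 Sg x) = leg12 Sg (K x) := by
    have h := dense_zero_aux (starRingEnd ℂ) hdense3
      (φ := fun x => K (leg12 Sg x) - leg12 Sg (K x))
      (by intro x y; beta_reduce; rw [map_add, Kadd, Kadd, map_add]; abel)
      (by intro c x; beta_reduce; rw [map_smul, Ksmul, Ksmul, map_smul, smul_sub])
      ((Kcont.comp (leg12 Sg).continuous).sub ((leg12 Sg).continuous.comp Kcont))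
      (by rintro x ⟨⟨a, b, c⟩, rfl⟩
          beta_reduce
          rw [hleg12, hSg, Kgen, Kgen, hleg12, hSg, sub_self])
    intro x
    exact sub_eq_zero.mp (h x)
  have K'S : ∀ x : H3, K' (leg12 Sg x) = leg12 Sg (K' x) := by
    have h := dense_zero_aux (starRingEnd ℂ) hdense3
      (φ := fun x => K' (leg12 Sg x) - leg12 Sg (K' x))
      (by intro x y; beta_reduce; rw [map_add, K'add, K'add, map_add]; abel)
      (by intro c x; beta_reduce; rw [map_smul, K'smul, K'smul, map_smul, smul_sub])
      ((K'cont.comp (leg12 Sg).continuous).sub ((leg12 Sg).continuous.comp K'cont))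
      (by rintro x ⟨⟨a, b, c⟩, rfl⟩
          beta_reduce
          rw [hleg12, hSg, K'gen, K'gen, hleg12, hSg, sub_self])
    intro x
    exact sub_eq_zero.mp (h x)
  -- conjugation identities
  have C12 : ∀ x : H3, leg12 W' x = K (leg12 W (K x)) := by
    have h := dense_zero_aux (RingHom.id ℂ) hdense3
      (φ := fun x => K (leg12 W (K x)) - leg12 W' x)
      (by intro x y; beta_reduce; rw [Kadd, map_add, Kadd, map_add]; abel)
      (by intro c x
          beta_reduce
          rw [Ksmul, map_smul, Ksmul, map_smul, Complex.conj_conj]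
          simp only [RingHom.id_apply, smul_sub])
      ((Kcont.comp ((leg12 W).continuous.comp Kcont)).sub (leg12 W').continuous)
      (by rintro x ⟨⟨a, b, c⟩, rfl⟩
          beta_reduce
          rw [Kgen, hleg12, Kmuc, hJhinv, hleg12, hW', hJJtmul, sub_self])
    intro x
    exact (sub_eq_zero.mp (h x)).symm
  have C12' : ∀ x : H3, leg12 W' x = K' (leg12 W (K' x)) := by
    have h := dense_zero_aux (RingHom.id ℂ) hdense3
      (φ := fun x => K' (leg12 W (K' x)) - leg12 W' x)
      (by intro x y; beta_reduce; rw [K'add, map_add, K'add, map_add]; abel)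
      (by intro c x
          beta_reduce
          rw [K'smul, map_smul, K'smul, map_smul, Complex.conj_conj]
          simp only [RingHom.id_apply, smul_sub])
      ((K'cont.comp ((leg12 W).continuous.comp K'cont)).sub (leg12 W').continuous)
      (by rintro x ⟨⟨a, b, c⟩, rfl⟩
          beta_reduce
          rw [K'gen, hleg12, K'muc, hJinv, hleg12, hW', hJJtmul, sub_self])
    intro x
    exact (sub_eq_zero.mp (h x)).symm
  have C23 : ∀ x : H3, leg23 W'' x = K (leg23 W (K x)) := by
    have h := dense_zero_aux (RingHom.id ℂ) hdense3
      (φ := fun x => K (leg23 W (K x)) - leg23 W'' x)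
      (by intro x y; beta_reduce; rw [Kadd, map_add, Kadd, map_add]; abel)
      (by intro c x
          beta_reduce
          rw [Ksmul, map_smul, Ksmul, map_smul, Complex.conj_conj]
          simp only [RingHom.id_apply, smul_sub])
      ((Kcont.comp ((leg23 W).continuous.comp Kcont)).sub (leg23 W'').continuous)
      (by rintro x ⟨⟨a, b, c⟩, rfl⟩
          beta_reduce
          simp only [hmm']
          rw [Km'aw, hleg23, Km'aw, hJinv, hleg23, hW'', sub_self])
    intro x
    exact (sub_eq_zero.mp (h x)).symm
  have C23' : ∀ x : H3, leg23 W' x = K' (leg23 W (K' x)) := by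
    have h := dense_zero_aux (RingHom.id ℂ) hdense3
      (φ := fun x => K' (leg23 W (K' x)) - leg23 W' x)
      (by intro x y; beta_reduce; rw [K'add, map_add, K'add, map_add]; abel)
      (by intro c x
          beta_reduce
          rw [K'smul, map_smul, K'smul, map_smul, Complex.conj_conj]
          simp only [RingHom.id_apply, smul_sub])
      ((K'cont.comp ((leg23 W).continuous.comp K'cont)).sub (leg23 W').continuous)
      (by rintro x ⟨⟨a, b, c⟩, rfl⟩
          beta_reduce
          simp only [hmm']
          rw [K'm'aw, hleg23, K'm'aw, hJinv, hleg23, hW', sub_self])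
    intro x
    exact (sub_eq_zero.mp (h x)).symm
  have C13 : ∀ x : H3, leg13 W'' x = K (leg13 W (K x)) := by
    intro x
    rw [hleg13, hleg13]
    simp only [ContinuousLinearMap.mul_apply]
    rw [C23, KS, ← KS]
  have C13' : ∀ x : H3, leg13 W' x = K' (leg13 W (K' x)) := by
    intro x
    rw [hleg13, hleg13]
    simp only [ContinuousLinearMap.mul_apply]
    rw [C23', K'S, ← K'S]
  -- conjugated pentagon equations
  have hR : leg12 W' * leg13 W'' * leg23 W'' = leg23 W'' * leg12 W' := by
    apply ContinuousLinearMap.ext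
    intro x
    have hP := congrArg (fun S : H3 →L[ℂ] H3 => S (K x)) hPent
    simp only [ContinuousLinearMap.mul_apply] at hP ⊢
    simp only [C12, C13, C23, KK]
    rw [hP]
  have hPent' : leg12 W' * leg13 W' * leg23 W' = leg23 W' * leg12 W' := by
    apply ContinuousLinearMap.ext
    intro x
    have hP := congrArg (fun S : H3 →L[ℂ] H3 => S (K' x)) hPent
    simp only [ContinuousLinearMap.mul_apply] at hP ⊢
    simp only [C12', C13', C23', K'K']
    rw [hP]
  -- inner-product flip for JJ in mixed form
  have flip2 : ∀ u v : H2, (inner ℂ (JJ u) v : ℂ) = inner ℂ (JJ v) u := by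
    intro u v
    have h := flipJJ u (JJ v)
    rw [hJJinv] at h
    exact h
  -- adjoint of W'
  have W'star : ∀ x : H2, (star W') x = JJ ((star W) (JJ x)) := by
    intro x
    apply ext_inner_left ℂ
    intro v
    calc (inner ℂ v ((star W') x) : ℂ)
        = inner ℂ (W' v) x := by
          rw [ContinuousLinearMap.star_eq_adjoint, ContinuousLinearMap.adjoint_inner_right]
      _ = inner ℂ (JJ (W (JJ v))) x := by rw [hW']
      _ = inner ℂ (JJ x) (W (JJ v)) := flip2 _ _
      _ = inner ℂ ((ContinuousLinearMap.adjoint W) (JJ x)) (JJ v) :=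
          (ContinuousLinearMap.adjoint_inner_left _ _ _).symm
      _ = inner ℂ (JJ (JJ ((ContinuousLinearMap.adjoint W) (JJ x)))) (JJ v) := by rw [hJJinv]
      _ = inner ℂ (JJ (JJ v)) (JJ ((ContinuousLinearMap.adjoint W) (JJ x))) := flip2 _ _
      _ = inner ℂ v (JJ ((star W) (JJ x))) := by
          rw [hJJinv, ContinuousLinearMap.star_eq_adjoint]
  -- W' is unitary
  have hW'l : W' * star W' = 1 := by
    apply ContinuousLinearMap.ext
    intro x
    simp only [ContinuousLinearMap.mul_apply, ContinuousLinearMap.one_apply]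
    rw [W'star, hW', hJJinv]
    have h := congrArg (fun S : H2 →L[ℂ] H2 => S (JJ x)) hWl
    simp only [ContinuousLinearMap.mul_apply, ContinuousLinearMap.one_apply] at h
    rw [h, hJJinv]
  have hW'r : star W' * W' = 1 := by
    apply ContinuousLinearMap.ext
    intro x
    simp only [ContinuousLinearMap.mul_apply, ContinuousLinearMap.one_apply]
    rw [W'star, hW', hJJinv]
    have h := congrArg (fun S : H2 →L[ℂ] H2 => S (JJ x)) hWr
    simp only [ContinuousLinearMap.mul_apply, ContinuousLinearMap.one_apply] at h
    rw [h, hJJinv]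
  -- extensionality via inner ℂ products against generators
  have inner_ext3 : ∀ v w : H3,
      (∀ a b c : H, (inner ℂ (m (τ a b) c) v : ℂ) = inner ℂ (m (τ a b) c) w) → v = w := by
    intro v w hvw
    have h := dense_zero_aux (starRingEnd ℂ) hdense3
      (φ := fun x => (inner ℂ x v : ℂ) - inner ℂ x w)
      (by intro x y; beta_reduce; rw [inner_add_left, inner_add_left]; ring)
      (by intro c x
          beta_reduce
          rw [inner_smul_left, inner_smul_left]
          simp only [smul_eq_mul]
          ring)
      ((Continuous.inner continuous_id continuous_const).sub
        (Continuous.inner continuous_id continuous_const))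
      (by rintro x ⟨⟨a, b, c⟩, rfl⟩
          beta_reduce
          rw [hvw, sub_self])
    have h2 := h (v - w)
    beta_reduce at h2
    have h3 : (inner ℂ (v - w) (v - w) : ℂ) = 0 := by
      rw [inner_sub_right]
      exact h2
    exact sub_eq_zero.mp (inner_self_eq_zero.mp h3)
  -- inner ℂ products of m' simple tensors
  have m'inner_gen : ∀ (a b c a' : H) (v' : H2),
      (inner ℂ (m' a (τ b c)) (m' a' v') : ℂ) = inner ℂ a a' * inner ℂ (τ b c) v' := by
    intro a b c a'
    have h := dense_zero_aux (RingHom.id ℂ) hτdense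
      (φ := fun v' => (inner ℂ (m' a (τ b c)) (m' a' v') : ℂ) - inner ℂ a a' * inner ℂ (τ b c) v')
      (by intro u v
          beta_reduce
          rw [map_add, inner_add_right, inner_add_right]
          ring)
      (by intro d u
          beta_reduce
          rw [map_smul, inner_smul_right, inner_smul_right]
          simp only [smul_eq_mul, RingHom.id_apply]
          ring)
      ((Continuous.inner continuous_const (m' a').continuous).sub
        (continuous_const.mul (Continuous.inner continuous_const continuous_id)))
      (by rintro v' ⟨⟨b', c'⟩, rfl⟩
          beta_reduce
          rw [← hmm', ← hmm', hminner, hτinner, hτinner]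
          ring)
    intro v'
    exact sub_eq_zero.mp (h v')
  have m'inner : ∀ (a a' : H) (v v' : H2),
      (inner ℂ (m' a v) (m' a' v') : ℂ) = inner ℂ a a' * inner ℂ v v' := by
    intro a a' v v'
    have h := dense_zero_aux (starRingEnd ℂ) hτdense
      (φ := fun v => (inner ℂ (m' a v) (m' a' v') : ℂ) - inner ℂ a a' * inner ℂ v v')
      (by intro u w
          beta_reduce
          rw [map_add, inner_add_left, inner_add_left]
          ring)
      (by intro d u
          beta_reduce
          rw [map_smul, inner_smul_left, inner_smul_left]
          simp only [smul_eq_mul]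
          ring)
      ((Continuous.inner ((m' a).continuous) continuous_const).sub
        (continuous_const.mul (Continuous.inner continuous_id continuous_const)))
      (by rintro v ⟨⟨b, c⟩, rfl⟩
          beta_reduce
          rw [m'inner_gen, sub_self])
    exact sub_eq_zero.mp (h v)
  -- extensionality for operators on H3
  have ext3L : ∀ S T : H3 →L[ℂ] H3,
      (∀ a b c : H, S (m (τ a b) c) = T (m (τ a b) c)) → S = T := by
    intro S T hST
    apply ContinuousLinearMap.ext
    intro x
    have h := dense_zero_aux (RingHom.id ℂ) hdense3 (φ := fun x => S x - T x)
      (by intro x y; beta_reduce; rw [map_add, map_add]; abel)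
      (by intro c x
          beta_reduce
          rw [map_smul, map_smul]
          simp only [RingHom.id_apply, smul_sub])
      (S.continuous.sub T.continuous)
      (by rintro x ⟨⟨a, b, c⟩, rfl⟩; beta_reduce; rw [hST, sub_self])
    exact sub_eq_zero.mp (h x)
  -- homomorphism properties of the legs
  have leg12_mul : ∀ S T : H2 →L[ℂ] H2, leg12 (S * T) = leg12 S * leg12 T := by
    intro S T
    apply ext3L
    intro a b c
    simp only [ContinuousLinearMap.mul_apply, hleg12]
  have leg12_one : leg12 1 = 1 := by
    apply ext3L
    intro a b c
    simp only [ContinuousLinearMap.one_apply, hleg12]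
  have leg23_mul : ∀ S T : H2 →L[ℂ] H2, leg23 (S * T) = leg23 S * leg23 T := by
    intro S T
    apply ext3L
    intro a b c
    simp only [hmm', ContinuousLinearMap.mul_apply, hleg23]
  have leg23_one : leg23 1 = 1 := by
    apply ext3L
    intro a b c
    simp only [hmm', ContinuousLinearMap.one_apply, hleg23]
  have leg12_star : ∀ T : H2 →L[ℂ] H2, star (leg12 T) = leg12 (star T) := by
    intro T
    apply ContinuousLinearMap.ext
    intro x
    apply inner_ext3
    intro a b c
    have h1 : (inner ℂ (m (τ a b) c) ((star (leg12 T)) x) : ℂ)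
        = inner ℂ ((leg12 T) (m (τ a b) c)) x := by
      rw [ContinuousLinearMap.star_eq_adjoint, ContinuousLinearMap.adjoint_inner_right]
    rw [h1, hleg12]
    have h := dense_zero_aux (RingHom.id ℂ) hdense3
      (φ := fun x => (inner ℂ (m (T (τ a b)) c) x : ℂ) - inner ℂ (m (τ a b) c) ((leg12 (star T)) x))
      (by intro u v
          beta_reduce
          rw [map_add, inner_add_right, inner_add_right]
          ring)
      (by intro d u
          beta_reduce
          rw [map_smul, inner_smul_right, inner_smul_right]
          simp only [smul_eq_mul, RingHom.id_apply]
          ring)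
      ((Continuous.inner continuous_const continuous_id).sub
        (Continuous.inner continuous_const (leg12 (star T)).continuous))
      (by rintro y ⟨⟨a', b', c'⟩, rfl⟩
          beta_reduce
          rw [hleg12, hminner, hminner]
          have hT : (inner ℂ (τ a b) ((star T) (τ a' b')) : ℂ) = inner ℂ (T (τ a b)) (τ a' b') := by
            rw [ContinuousLinearMap.star_eq_adjoint, ContinuousLinearMap.adjoint_inner_right]
          rw [hT, sub_self])
    exact sub_eq_zero.mp (h x)
  have leg23_star : ∀ T : H2 →L[ℂ] H2, star (leg23 T) = leg23 (star T) := by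
    intro T
    apply ContinuousLinearMap.ext
    intro x
    apply inner_ext3
    intro a b c
    have h1 : (inner ℂ (m (τ a b) c) ((star (leg23 T)) x) : ℂ)
        = inner ℂ ((leg23 T) (m (τ a b) c)) x := by
      rw [ContinuousLinearMap.star_eq_adjoint, ContinuousLinearMap.adjoint_inner_right]
    rw [h1, hmm', hleg23]
    have h := dense_zero_aux (RingHom.id ℂ) hdense3
      (φ := fun x => (inner ℂ (m' a (T (τ b c))) x : ℂ) - inner ℂ (m' a (τ b c)) ((leg23 (star T)) x))
      (by intro u v
          beta_reduce
          rw [map_add, inner_add_right, inner_add_right]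
          ring)
      (by intro d u
          beta_reduce
          rw [map_smul, inner_smul_right, inner_smul_right]
          simp only [smul_eq_mul, RingHom.id_apply]
          ring)
      ((Continuous.inner continuous_const continuous_id).sub
        (Continuous.inner continuous_const (leg23 (star T)).continuous))
      (by rintro y ⟨⟨a', b', c'⟩, rfl⟩
          beta_reduce
          rw [hmm', hleg23, m'inner, m'inner]
          have hT : (inner ℂ (τ b c) ((star T) (τ b' c')) : ℂ) = inner ℂ (T (τ b c)) (τ b' c') := by
            rw [ContinuousLinearMap.star_eq_adjoint, ContinuousLinearMap.adjoint_inner_right]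
          rw [hT, sub_self])
    exact sub_eq_zero.mp (h x)
  -- unitarity of the legs of W'
  have hA : star (leg12 W') * leg12 W' = 1 := by
    rw [leg12_star, ← leg12_mul, hW'r, leg12_one]
  have hC : leg23 W' * star (leg23 W') = 1 := by
    rw [leg23_star, ← leg23_mul, hW'l, leg23_one]
  -- pointwise versions
  have hApt : ∀ z : H3, (star (leg12 W')) ((leg12 W') z) = z := by
    intro z
    have h := congrArg (fun S : H3 →L[ℂ] H3 => S z) hA
    simpa only [ContinuousLinearMap.mul_apply, ContinuousLinearMap.one_apply] using h
  have hCpt : ∀ z : H3, (leg23 W') ((star (leg23 W')) z) = z := by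
    intro z
    have h := congrArg (fun S : H3 →L[ℂ] H3 => S z) hC
    simpa only [ContinuousLinearMap.mul_apply, ContinuousLinearMap.one_apply] using h
  have hPent'pt : ∀ z : H3, leg12 W' (leg13 W' (leg23 W' z)) = leg23 W' (leg12 W' z) := by
    intro z
    have h := congrArg (fun S : H3 →L[ℂ] H3 => S z) hPent'
    simpa only [ContinuousLinearMap.mul_apply] using h
  have hRpt : ∀ z : H3, leg12 W' (leg13 W'' (leg23 W'' z)) = leg23 W'' (leg12 W' z) := by
    intro z
    have h := congrArg (fun S : H3 →L[ℂ] H3 => S z) hR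
    simpa only [ContinuousLinearMap.mul_apply] using h
  have hcommpt : ∀ z : H3, leg23 W'' (leg13 W' z) = leg13 W' (leg23 W'' z) := by
    intro z
    have h := congrArg (fun S : H3 →L[ℂ] H3 => S z) hcomm.eq
    simpa only [ContinuousLinearMap.mul_apply] using h
  -- final assembly
  apply ContinuousLinearMap.ext
  intro x
  simp only [ContinuousLinearMap.mul_apply]
  rw [← hPent'pt]
  rw [hCpt]
  rw [← hRpt]
  rw [hApt]
  rw [hcommpt]
end
end
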